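/- arXiv:2008.05669 — 4 statements merged into one kernel-verified Lean document; each statement's English description precedes it below -/
import Mathlib

section
/- There exists a bijection between the set of pairs (D, P) where D is a Dyck path of semilength at most n and P is a distinguished symmetric peak of D, and the set of triples (D', P', i) where D' is a Dyck path of semilength exactly n, P' is a distinguished symmetric peak of D', and 1 ≤ i ≤ weight of P'. The map inserts a pyramid u^{n−k} d^{n−k} at the top of the distinguished peak of a path of semilength k. -/
/-- Height of the vertex after the first `j` steps of the path `w`
(`true` = up-step `u`, `false` = down-step `d`). -/
def hgt (w : List Bool) (j : ℕ) : ℤ :=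
  ((w.take j).count true : ℤ) - ((w.take j).count false : ℤ)

/-- `w` is a Dyck word: equally many `u`'s and `d`'s, and every prefix
has at least as many `u`'s as `d`'s. -/
def IsDyckWord (w : List Bool) : Prop :=
  w.count true = w.count false ∧ ∀ j, 0 ≤ hgt w j

instance : DecidablePred IsDyckWord := fun w => by
  have : IsDyckWord w ↔ (w.count true = w.count false ∧
      ∀ j ∈ List.range (w.length + 1), 0 ≤ hgt w j) := by
    constructor
    · rintro ⟨h1, h2⟩; exact ⟨h1, fun j _ => h2 j⟩
    · rintro ⟨h1, h2⟩
      refine ⟨h1, fun j => ?_⟩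
      rcases le_or_gt j w.length with h | h
      · exact h2 j (List.mem_range.mpr (Nat.lt_succ_of_le h))
      · have : w.take j = w := List.take_of_length_le h.le
        have hw : hgt w j = hgt w w.length := by
          unfold hgt
          rw [this, List.take_of_length_le (le_refl _)]
        rw [hw]
        exact h2 w.length (List.mem_range.mpr (Nat.lt_succ_of_le (le_refl _)))
  exact decidable_of_iff' _ this

/-- there is a peak (an occurrence of `ud`) at positions `i, i+1`. -/
def isPeakB (w : List Bool) (i : ℕ) : Bool :=
  w.getD i false && !(w.getD (i+1) true)

/-- there is a valley (an occurrence of `du`) at positions `i, i+1`. -/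
def isValleyB (w : List Bool) (i : ℕ) : Bool :=
  !(w.getD i true) && w.getD (i+1) false

/-- length of the maximal run of `u`'s ending at position `i`. -/
def upRunL (w : List Bool) (i : ℕ) : ℕ :=
  ((List.range (i+1)).takeWhile (fun k => w.getD (i-k) false)).length

/-- length of the maximal run of `d`'s starting at position `i`. -/
def downRunR (w : List Bool) (i : ℕ) : ℕ :=
  ((List.range (w.length - i)).takeWhile (fun k => !(w.getD (i+k) true))).length

/-- length of the maximal run of `d`'s ending at position `i`. -/
def downRunL (w : List Bool) (i : ℕ) : ℕ :=
  ((List.range (i+1)).takeWhile (fun k => !(w.getD (i-k) true))).length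

/-- length of the maximal run of `u`'s starting at position `i`. -/
def upRunR (w : List Bool) (i : ℕ) : ℕ :=
  ((List.range (w.length - i)).takeWhile (fun k => w.getD (i+k) false)).length

/-- The peak at `i` is symmetric: its maximal mountain `u^a d^b` has `a = b`. -/
def isSymPeakB (w : List Bool) (i : ℕ) : Bool :=
  isPeakB w i && (upRunL w i == downRunR w (i+1))

/-- The peak at `i` is asymmetric: its maximal mountain `u^a d^b` has `a ≠ b`. -/
def isAsymPeakB (w : List Bool) (i : ℕ) : Bool :=
  isPeakB w i && !(upRunL w i == downRunR w (i+1))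

/-- weight of the peak at `i`: `min a b` for its maximal mountain `u^a d^b`. -/
def peakWeight (w : List Bool) (i : ℕ) : ℕ :=
  min (upRunL w i) (downRunR w (i+1))

/-- The valley at `i` is symmetric: the maximal `d^a u^b` containing it has `a = b`. -/
def isSymValleyB (w : List Bool) (i : ℕ) : Bool :=
  isValleyB w i && (downRunL w i == upRunR w (i+1))

/-- weight of the valley at `i`: the largest `j` with `d^j u^j` through the valley. -/
def valleyWeight (w : List Bool) (i : ℕ) : ℕ :=
  min (downRunL w i) (upRunR w (i+1))

def peakCount (w : List Bool) : ℕ := ((List.range w.length).filter (isPeakB w)).length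
def spCount (w : List Bool) : ℕ := ((List.range w.length).filter (isSymPeakB w)).length
def apCount (w : List Bool) : ℕ := ((List.range w.length).filter (isAsymPeakB w)).length
def svalCount (w : List Bool) : ℕ := ((List.range w.length).filter (isSymValleyB w)).length

/-- total weight of the symmetric peaks of `w`. -/
def spWeight (w : List Bool) : ℕ :=
  (((List.range w.length).filter (isSymPeakB w)).map (peakWeight w)).sum

/-- total weight of the asymmetric peaks of `w`. -/
def apWeight (w : List Bool) : ℕ :=
  (((List.range w.length).filter (isAsymPeakB w)).map (peakWeight w)).sum

/-- total weight of the symmetric valleys of `w`. -/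
def svWeight (w : List Bool) : ℕ :=
  (((List.range w.length).filter (isSymValleyB w)).map (valleyWeight w)).sum

/-- positions of the peaks of `w`, from left to right. -/
def peakList (w : List Bool) : List ℕ := (List.range w.length).filter (isPeakB w)

/-- positions of the valleys of `w`, from left to right. -/
def valleyList (w : List Bool) : List ℕ := (List.range w.length).filter (isValleyB w)

/-- heights of the peaks of `w`, from left to right. -/
def peakHeights (w : List Bool) : List ℤ := (peakList w).map (fun i => hgt w (i+1))

/-- heights of the valleys of `w`, from left to right. -/
def valleyHeights (w : List Bool) : List ℤ := (valleyList w).map (fun i => hgt w (i+1))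

/-- number of pairs of adjacent equal entries of a list. -/
def eqAdjCount (l : List ℤ) : ℕ :=
  ((l.zip l.tail).filter (fun p => decide (p.1 = p.2))).length

/-- `sp'`: number of pairs of consecutive valleys of `w` at the same height. -/
def spPrime (w : List Bool) : ℕ := eqAdjCount (valleyHeights w)

/-- all Bool lists of length `m`, as a Finset. -/
def boolLists (m : ℕ) : Finset (List Bool) :=
  Finset.image (fun f : Fin m → Bool => List.ofFn f) Finset.univ

/-- The (finite) set of Dyck words of semilength `n`. -/
def dyckFinset (n : ℕ) : Finset (List Bool) :=
  (boolLists (2*n)).filter (fun w => IsDyckWord w)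




namespace SPB

/-- getD-based characterization: compute the length of takeWhile. -/
lemma len_takeWhile_eq {α : Type*} (P : α → Bool) (d : α) :
    ∀ (l : List α) (r : ℕ), r ≤ l.length →
      (∀ i < r, P (l.getD i d) = true) →
      (r < l.length → P (l.getD r d) = false) →
      (l.takeWhile P).length = r := by
  intro l
  induction l with
  | nil => intro r hr _ _; simp at hr ⊢; omega
  | cons a t ih =>
    intro r hr h1 h2
    cases r with
    | zero =>
      have := h2 (by simp)
      simp only [List.getD_cons_zero] at this
      simp [List.takeWhile_cons, this]
    | succ r =>
      have ha : P a = true := by simpa using h1 0 (by omega)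
      simp only [List.takeWhile_cons, ha, if_pos, List.length_cons]
      have := ih r (by simpa using hr) (fun i hi => by simpa using h1 (i+1) (by omega))
        (fun h => by simpa using h2 (by simpa using h))
      omega

lemma takeWhile_spec {α : Type*} (P : α → Bool) (d : α) (l : List α) :
    (l.takeWhile P).length ≤ l.length ∧
    (∀ i < (l.takeWhile P).length, P (l.getD i d) = true) ∧
    ((l.takeWhile P).length < l.length → P (l.getD (l.takeWhile P).length d) = false) := by
  induction l with
  | nil => simp
  | cons a t ih =>
    by_cases ha : P a = true
    · simp only [List.takeWhile_cons, ha, if_pos, List.length_cons]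
      refine ⟨by simpa using ih.1, fun i hi => ?_, fun h => ?_⟩
      · cases i with
        | zero => simpa using ha
        | succ i => simpa using ih.2.1 i (by omega)
      · simpa using ih.2.2 (by simpa using h)
    · rw [Bool.not_eq_true] at ha
      simp only [List.takeWhile_cons, ha, if_neg, Bool.false_eq_true, not_false_iff]
      refine ⟨by simp, by simp, fun _ => ?_⟩
      simpa using ha


lemma getD_range (n i : ℕ) (h : i < n) : (List.range n).getD i 0 = i := by
  rw [List.getD_eq_getElem _ _ (by simpa using h)]; exact List.getElem_range _

end SPB

namespace SPB

lemma upRunL_spec (w : List Bool) (i : ℕ) :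
    upRunL w i ≤ i+1 ∧ (∀ k < upRunL w i, w.getD (i-k) false = true) ∧
    (upRunL w i < i+1 → w.getD (i - upRunL w i) false = false) := by
  unfold upRunL
  obtain ⟨h1, h2, h3⟩ := takeWhile_spec (fun k => w.getD (i-k) false) 0 (List.range (i+1))
  rw [List.length_range] at h1 h3
  refine ⟨h1, fun k hk => ?_, fun h => ?_⟩
  · have := h2 k hk
    rwa [getD_range _ _ (by omega)] at this
  · have := h3 h
    rwa [getD_range _ _ (by omega)] at this

lemma upRunL_eq (w : List Bool) (i r : ℕ) (h1 : r ≤ i+1)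
    (h2 : ∀ k < r, w.getD (i-k) false = true)
    (h3 : r < i+1 → w.getD (i-r) false = false) : upRunL w i = r := by
  unfold upRunL
  apply len_takeWhile_eq _ 0
  · simpa using h1
  · intro k hk
    rw [getD_range _ _ (by omega)]
    exact h2 k hk
  · intro h
    rw [List.length_range] at h
    rw [getD_range _ _ (by omega)]
    exact h3 h

lemma downRunR_spec (w : List Bool) (i : ℕ) :
    downRunR w i ≤ w.length - i ∧ (∀ k < downRunR w i, w.getD (i+k) true = false) ∧
    (downRunR w i < w.length - i → w.getD (i + downRunR w i) true = true) := by
  unfold downRunR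
  obtain ⟨h1, h2, h3⟩ := takeWhile_spec (fun k => !(w.getD (i+k) true)) 0 (List.range (w.length - i))
  rw [List.length_range] at h1 h3
  refine ⟨h1, fun k hk => ?_, fun h => ?_⟩
  · have := h2 k hk
    rw [getD_range _ _ (by omega)] at this
    simpa using this
  · have := h3 h
    rw [getD_range _ _ (by omega)] at this
    simpa using this

lemma downRunR_eq (w : List Bool) (i r : ℕ) (h1 : r ≤ w.length - i)
    (h2 : ∀ k < r, w.getD (i+k) true = false)
    (h3 : r < w.length - i → w.getD (i+r) true = true) : downRunR w i = r := by
  unfold downRunR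
  apply len_takeWhile_eq _ 0
  · simpa using h1
  · intro k hk
    rw [getD_range _ _ (by omega)]
    simpa using h2 k hk
  · intro h
    rw [List.length_range] at h
    rw [getD_range _ _ (by omega)]
    simpa using h3 h

end SPB

namespace SPB

lemma hgt_append (a b : List Bool) (j : ℕ) :
    hgt (a ++ b) j = hgt a j + hgt b (j - a.length) := by
  unfold hgt
  rw [List.take_append, List.count_append, List.count_append]
  push_cast
  ring

lemma hgt_const (w : List Bool) {j : ℕ} (h : w.length ≤ j) : hgt w j = hgt w w.length := by
  unfold hgt
  rw [List.take_of_length_le h, List.take_of_length_le le_rfl]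

lemma hgt_replicate_true (m j : ℕ) : hgt (List.replicate m true) j = (min j m : ℕ) := by
  unfold hgt
  rw [List.take_replicate]
  simp [List.count_replicate]

lemma hgt_replicate_false (m j : ℕ) : hgt (List.replicate m false) j = -((min j m : ℕ) : ℤ) := by
  unfold hgt
  rw [List.take_replicate]
  simp [List.count_replicate]

lemma hgt_take (w : List Bool) (n j : ℕ) : hgt (w.take n) j = hgt w (min j n) := by
  unfold hgt
  rw [List.take_take]

lemma hgt_drop (w : List Bool) (n j : ℕ) : hgt (w.drop n) j = hgt w (n + j) - hgt w n := by
  have h := hgt_append (w.take n) (w.drop n) (n + j)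
  rw [List.take_append_drop] at h
  rcases le_or_gt n w.length with hn | hn
  · rw [List.length_take, min_eq_left hn] at h
    rw [hgt_take, min_eq_right (by omega), Nat.add_sub_cancel_left] at h
    omega
  · have h1 : w.drop n = [] := List.drop_eq_nil_of_le hn.le
    have h2 : hgt w (n + j) = hgt w n := by
      rw [hgt_const w (by omega), hgt_const w (le_of_lt hn)]
    rw [h1, h2]
    simp [hgt]

end SPB

/-- insert a pyramid `u^m d^m` at the top of the peak at position `p`. -/
def pins (w : List Bool) (p m : ℕ) : List Bool :=
  w.take (p+1) ++ (List.replicate m true ++ (List.replicate m false ++ w.drop (p+1)))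

/-- delete a pyramid `u^m d^m` from the top of the peak at position `p`. -/
def pdel (w : List Bool) (p m : ℕ) : List Bool :=
  w.take (p+1-m) ++ w.drop (p+1+m)

namespace SPB

lemma length_pins (w : List Bool) (p m : ℕ) (hp : p + 1 ≤ w.length) :
    (pins w p m).length = w.length + 2*m := by
  simp [pins, List.length_take, List.length_drop]
  omega

lemma getD_replicate' {a d : α} {m i : ℕ} (h : i < m) :
    (List.replicate m a).getD i d = a := by
  rw [List.getD_eq_getElem _ _ (by simpa using h)]
  exact List.getElem_replicate _

lemma getD_pins_lt (w : List Bool) (p m j : ℕ) (hp : p + 1 ≤ w.length) (hj : j < p + 1) (d : Bool) :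
    (pins w p m).getD j d = w.getD j d := by
  unfold pins
  have ht : (List.take (p+1) w).length = p+1 := by rw [List.length_take]; omega
  rw [List.getD_append _ _ _ _ (by rw [ht]; omega)]
  rw [List.getD_eq_getElem _ _ (by rw [ht]; omega),
    List.getElem_take, ← List.getD_eq_getElem _ d (by omega)]

lemma getD_pins_up (w : List Bool) (p m j : ℕ) (hp : p + 1 ≤ w.length)
    (h1 : p + 1 ≤ j) (h2 : j < p + 1 + m) (d : Bool) :
    (pins w p m).getD j d = true := by
  unfold pins
  have ht : (List.take (p+1) w).length = p+1 := by rw [List.length_take]; omega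
  rw [List.getD_append_right _ _ _ _ (by rw [ht]; omega), ht]
  rw [List.getD_append _ _ _ _ (by rw [List.length_replicate]; omega)]
  exact getD_replicate' (by omega)

lemma getD_pins_down (w : List Bool) (p m j : ℕ) (hp : p + 1 ≤ w.length)
    (h1 : p + 1 + m ≤ j) (h2 : j < p + 1 + 2*m) (d : Bool) :
    (pins w p m).getD j d = false := by
  unfold pins
  have ht : (List.take (p+1) w).length = p+1 := by rw [List.length_take]; omega
  rw [List.getD_append_right _ _ _ _ (by rw [ht]; omega), ht]
  rw [List.getD_append_right _ _ _ _ (by rw [List.length_replicate]; omega), List.length_replicate]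
  rw [List.getD_append _ _ _ _ (by rw [List.length_replicate]; omega)]
  exact getD_replicate' (by omega)

lemma getD_pins_ge (w : List Bool) (p m j : ℕ) (hp : p + 1 ≤ w.length)
    (h1 : p + 1 + 2*m ≤ j) (d : Bool) :
    (pins w p m).getD j d = w.getD (j - 2*m) d := by
  unfold pins
  have ht : (List.take (p+1) w).length = p+1 := by rw [List.length_take]; omega
  rw [List.getD_append_right _ _ _ _ (by rw [ht]; omega), ht]
  rw [List.getD_append_right _ _ _ _ (by rw [List.length_replicate]; omega), List.length_replicate]
  rw [List.getD_append_right _ _ _ _ (by rw [List.length_replicate]; omega), List.length_replicate]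
  rcases lt_or_ge (j - 2*m) w.length with hc | hc
  · rw [List.getD_eq_getElem _ _ (by rw [List.length_drop]; omega),
      List.getElem_drop, ← List.getD_eq_getElem _ d (by omega)]
    congr 1
    omega
  · rw [List.getD_eq_default _ _ (by rw [List.length_drop]; omega),
      List.getD_eq_default _ _ (by omega)]

lemma getD_pdel_lt (w : List Bool) (p m j : ℕ) (hj : j < p + 1 - m) (d : Bool) :
    (pdel w p m).getD j d = w.getD j d := by
  unfold pdel
  rcases le_or_gt (p+1-m) w.length with hc | hc
  · have ht : (List.take (p+1-m) w).length = p+1-m := by rw [List.length_take]; omega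
    rw [List.getD_append _ _ _ _ (by rw [ht]; omega)]
    rw [List.getD_eq_getElem _ _ (by rw [ht]; omega),
      List.getElem_take, ← List.getD_eq_getElem _ d (by omega)]
  · rcases le_or_gt w.length j with hc2 | hc2
    · rw [List.getD_eq_default _ _ (by simp [List.length_take, List.length_drop]; omega),
        List.getD_eq_default _ _ hc2]
    · have ht : (List.take (p+1-m) w).length = w.length := by rw [List.length_take]; omega
      rw [List.getD_append _ _ _ _ (by rw [ht]; omega)]
      rw [List.getD_eq_getElem _ _ (by rw [ht]; omega),
        List.getElem_take, ← List.getD_eq_getElem _ d (by omega)]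

lemma getD_pdel_ge (w : List Bool) (p m j : ℕ) (hm : m ≤ p) (hw : p + 1 + m ≤ w.length)
    (hj : p + 1 - m ≤ j) (d : Bool) :
    (pdel w p m).getD j d = w.getD (j + 2*m) d := by
  unfold pdel
  have ht : (List.take (p+1-m) w).length = p+1-m := by rw [List.length_take]; omega
  rw [List.getD_append_right _ _ _ _ (by rw [ht]; omega), ht]
  rcases lt_or_ge (j - (p+1-m)) (w.length - (p+1+m)) with hc | hc
  · rw [List.getD_eq_getElem _ _ (by rw [List.length_drop]; omega),
      List.getElem_drop, ← List.getD_eq_getElem _ d (by omega)]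
    congr 1
    omega
  · rw [List.getD_eq_default _ _ (by rw [List.length_drop]; omega),
      List.getD_eq_default _ _ (by omega)]

end SPB

namespace SPB

lemma symPeak_unpack {w : List Bool} {p : ℕ} (hp : isSymPeakB w p = true) :
    w.getD p false = true ∧ w.getD (p+1) true = false ∧ upRunL w p = downRunR w (p+1) := by
  simp only [isSymPeakB, isPeakB, Bool.and_eq_true, beq_iff_eq, Bool.not_eq_true'] at hp
  exact ⟨hp.1.1, hp.1.2, hp.2⟩

lemma symPeak_pack {w : List Bool} {p : ℕ} (h1 : w.getD p false = true)
    (h2 : w.getD (p+1) true = false) (h3 : upRunL w p = downRunR w (p+1)) :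
    isSymPeakB w p = true := by
  simp only [isSymPeakB, isPeakB, Bool.and_eq_true, beq_iff_eq, Bool.not_eq_true']
  exact ⟨⟨h1, h2⟩, h3⟩

lemma symPeak_len {w : List Bool} {p : ℕ} (hp : isSymPeakB w p = true) :
    p + 1 < w.length := by
  obtain ⟨h1, h2, -⟩ := symPeak_unpack hp
  by_contra h
  rw [List.getD_eq_default _ _ (by omega)] at h2
  exact absurd h2 (by simp)

lemma symPeak_upRun_pos {w : List Bool} {p : ℕ} (hp : isSymPeakB w p = true) :
    1 ≤ upRunL w p := by
  obtain ⟨h1, -, -⟩ := symPeak_unpack hp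
  by_contra h
  have h0 : upRunL w p = 0 := by omega
  have := (upRunL_spec w p).2.2 (by omega)
  rw [h0, Nat.sub_zero] at this
  rw [h1] at this
  exact absurd this (by simp)

lemma symPeak_weight_pos {w : List Bool} {p : ℕ} (hp : isSymPeakB w p = true) :
    1 ≤ peakWeight w p := by
  have h1 := symPeak_upRun_pos hp
  have h2 := (symPeak_unpack hp).2.2
  unfold peakWeight
  omega

lemma pins_runL {w : List Bool} {p : ℕ} (m : ℕ) (hp : isSymPeakB w p = true) :
    upRunL (pins w p m) (p+m) = upRunL w p + m := by
  have hlen := symPeak_len hp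
  obtain ⟨hu, hd, hab⟩ := symPeak_unpack hp
  obtain ⟨ha1, ha2, ha3⟩ := upRunL_spec w p
  apply upRunL_eq
  · omega
  · intro k hk
    rcases lt_or_ge k m with hkm | hkm
    · exact getD_pins_up w p m _ (by omega) (by omega) (by omega) _
    · have he : p + m - k = p - (k - m) := by omega
      rw [he]
      have h2 : p - (k-m) < p + 1 := by omega
      rw [getD_pins_lt w p m _ (by omega) h2 _]
      exact ha2 (k-m) (by omega)
  · intro h
    have ha : upRunL w p < p + 1 := by omega
    have he : p + m - (upRunL w p + m) = p - upRunL w p := by omega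
    rw [he, getD_pins_lt w p m _ (by omega) (by omega) _]
    exact ha3 ha

lemma pins_runR {w : List Bool} {p : ℕ} (m : ℕ) (hp : isSymPeakB w p = true) :
    downRunR (pins w p m) (p+m+1) = downRunR w (p+1) + m := by
  have hlen := symPeak_len hp
  obtain ⟨hu, hd, hab⟩ := symPeak_unpack hp
  obtain ⟨hb1, hb2, hb3⟩ := downRunR_spec w (p+1)
  have hL : (pins w p m).length = w.length + 2*m := length_pins w p m (by omega)
  apply downRunR_eq
  · rw [hL]; omega
  · intro k hk
    rcases lt_or_ge k m with hkm | hkm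
    · exact getD_pins_down w p m _ (by omega) (by omega) (by omega) _
    · have he : p + m + 1 + k = (p + 1 + (k - m)) + 2*m := by omega
      rw [he, getD_pins_ge w p m _ (by omega) (by omega) _]
      have : p + 1 + (k-m) + 2*m - 2*m = p + 1 + (k-m) := by omega
      rw [this]
      exact hb2 (k-m) (by omega)
  · intro h
    rw [hL] at h
    have hb : downRunR w (p+1) < w.length - (p+1) := by omega
    have he : p + m + 1 + (downRunR w (p+1) + m) = (p + 1 + downRunR w (p+1)) + 2*m := by omega
    rw [he, getD_pins_ge w p m _ (by omega) (by omega) _]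
    have : p + 1 + downRunR w (p+1) + 2*m - 2*m = p + 1 + downRunR w (p+1) := by omega
    rw [this]
    exact hb3 hb

lemma pins_symPeak {w : List Bool} {p : ℕ} (m : ℕ) (hp : isSymPeakB w p = true) :
    isSymPeakB (pins w p m) (p+m) = true := by
  have hlen := symPeak_len hp
  obtain ⟨hu, hd, hab⟩ := symPeak_unpack hp
  have ha := symPeak_upRun_pos hp
  have h1 : (pins w p m).getD (p+m) false = true := by
    have := (upRunL_spec (pins w p m) (p+m)).2.1 0 (by rw [pins_runL m hp]; omega)
    simpa using this
  have h2 : (pins w p m).getD (p+m+1) true = false := by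
    have := (downRunR_spec (pins w p m) (p+m+1)).2.1 0 (by rw [pins_runR m hp]; omega)
    simpa using this
  exact symPeak_pack h1 h2 (by rw [pins_runL m hp, pins_runR m hp, hab])

lemma pins_weight {w : List Bool} {p : ℕ} (m : ℕ) (hp : isSymPeakB w p = true) :
    peakWeight (pins w p m) (p+m) = peakWeight w p + m := by
  unfold peakWeight
  rw [pins_runL m hp, pins_runR m hp]
  omega

lemma count_true_add_count_false (w : List Bool) :
    w.count true + w.count false = w.length := by
  induction w with
  | nil => simp
  | cons a t ih => cases a <;> simp [List.count_cons] <;> omega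

lemma pins_dyck {w : List Bool} {p : ℕ} (m : ℕ) (hd : IsDyckWord w)
    (hp : isSymPeakB w p = true) : IsDyckWord (pins w p m) := by
  have hlen := symPeak_len hp
  have hsplit : w.take (p+1) ++ w.drop (p+1) = w := List.take_append_drop _ _
  constructor
  · have hwt : (w.take (p+1)).count true + (w.drop (p+1)).count true = w.count true := by
      rw [← List.count_append, hsplit]
    have hwf : (w.take (p+1)).count false + (w.drop (p+1)).count false = w.count false := by
      rw [← List.count_append, hsplit]
    have h1 : (pins w p m).count true = w.count true + m := by
      simp [pins, List.count_append, List.count_replicate]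
      omega
    have h2 : (pins w p m).count false = w.count false + m := by
      simp [pins, List.count_append, List.count_replicate]
      omega
    rw [h1, h2, hd.1]
  · intro j
    have ht : (List.take (p+1) w).length = p+1 := by rw [List.length_take]; omega
    have key : hgt (pins w p m) j =
        hgt w (min j (p+1)) + ((min (j - (p+1)) m : ℕ) : ℤ) - ((min (j - (p+1) - m) m : ℕ) : ℤ)
          + (hgt w ((p+1) + (j - (p+1) - m - m)) - hgt w (p+1)) := by
      unfold pins
      rw [hgt_append, hgt_append, hgt_append, ht, List.length_replicate, List.length_replicate,
        hgt_take, hgt_replicate_true, hgt_replicate_false, hgt_drop]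
      ring
    rw [key]
    rcases le_or_gt j (p+1) with hc | hc
    · have e1 : min j (p+1) = j := by omega
      have e2 : j - (p+1) = 0 := by omega
      rw [e1, e2]
      simp only [Nat.zero_sub, Nat.zero_min, Nat.add_zero, Nat.sub_zero]
      have := hd.2 j
      push_cast
      omega
    · rcases le_or_gt j (p+1+2*m) with hc2 | hc2
      · have e1 : min j (p+1) = p+1 := by omega
        have e2 : j - (p+1) - m - m = 0 := by omega
        rw [e1, e2, Nat.add_zero]
        have h1 := hd.2 (p+1)
        have h3 : min (j - (p+1) - m) m ≤ min (j - (p+1)) m := by omega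
        push_cast
        omega
      · have e1 : min j (p+1) = p+1 := by omega
        have e2 : min (j - (p+1)) m = m := by omega
        have e3 : min (j - (p+1) - m) m = m := by omega
        have e4 : (p+1) + (j - (p+1) - m - m) = j - 2*m := by omega
        rw [e1, e2, e3, e4]
        have := hd.2 (j - 2*m)
        push_cast
        omega

end SPB

namespace SPB

lemma count_pins_true (w : List Bool) (p m : ℕ) (hp : p + 1 ≤ w.length) :
    (pins w p m).count true = w.count true + m := by
  have hsplit : w.take (p+1) ++ w.drop (p+1) = w := List.take_append_drop _ _
  have hwt : (w.take (p+1)).count true + (w.drop (p+1)).count true = w.count true := by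
    rw [← List.count_append, hsplit]
  simp [pins, List.count_append, List.count_replicate]
  omega

lemma count_pins_false (w : List Bool) (p m : ℕ) (hp : p + 1 ≤ w.length) :
    (pins w p m).count false = w.count false + m := by
  have hsplit : w.take (p+1) ++ w.drop (p+1) = w := List.take_append_drop _ _
  have hwt : (w.take (p+1)).count false + (w.drop (p+1)).count false = w.count false := by
    rw [← List.count_append, hsplit]
  simp [pins, List.count_append, List.count_replicate]
  omega

variable {w : List Bool} {p m : ℕ}

lemma pdel_basic (hp : isSymPeakB w p = true) (hm : m < peakWeight w p) :
    m ≤ p ∧ p + 1 + m ≤ w.length ∧ (pdel w p m).length = w.length - 2*m := by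
  have hlen := symPeak_len hp
  obtain ⟨hu, hd, hab⟩ := symPeak_unpack hp
  have ha1 := (upRunL_spec w p).1
  have hb1 := (downRunR_spec w (p+1)).1
  unfold peakWeight at hm
  have h1 : m ≤ p := by omega
  have h2 : p + 1 + m ≤ w.length := by omega
  refine ⟨h1, h2, ?_⟩
  simp [pdel, List.length_take, List.length_drop]
  omega

lemma pdel_decomp (hp : isSymPeakB w p = true) (hm : m < peakWeight w p) :
    w.drop (p+1-m) = List.replicate m true ++ (List.replicate m false ++ w.drop (p+1+m)) := by
  have hlen := symPeak_len hp
  obtain ⟨hmp, hml, -⟩ := pdel_basic hp hm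
  obtain ⟨ha1, ha2, ha3⟩ := upRunL_spec w p
  obtain ⟨hb1, hb2, hb3⟩ := downRunR_spec w (p+1)
  unfold peakWeight at hm
  apply List.ext_getElem
  · simp [List.length_drop, List.length_append, List.length_replicate]
    omega
  · intro i h1 h2
    rw [List.length_drop] at h1
    rw [List.getElem_drop]
    rcases lt_or_ge i m with hi | hi
    · rw [List.getElem_append_left (by simpa using hi)]
      rw [List.getElem_replicate]
      rw [← List.getD_eq_getElem w false (n := p+1-m+i) (by omega),
        show p+1-m+i = p - (m-1-i) from by omega]
      exact ha2 (m-1-i) (by omega)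
    · rw [List.getElem_append_right (by simpa using hi)]
      rcases lt_or_ge i (2*m) with hi2 | hi2
      · rw [List.getElem_append_left (by simp [List.length_replicate]; omega)]
        rw [List.getElem_replicate]
        rw [← List.getD_eq_getElem w true (n := p+1-m+i) (by omega),
          show p+1-m+i = p+1+(i-m) from by omega]
        exact hb2 (i-m) (by omega)
      · rw [List.getElem_append_right (by simp [List.length_replicate]; omega)]
        rw [List.getElem_drop]
        simp only [List.length_replicate]
        rw [← List.getD_eq_getElem w false (n := p+1-m+i) (by omega),
          ← List.getD_eq_getElem w false (n := p+1+m+(i-m-m)) (by omega),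
          show p+1-m+i = p+1+m+(i-m-m) from by omega]

lemma pins_pdel (hp : isSymPeakB w p = true) (hm : m < peakWeight w p) :
    pins (pdel w p m) (p-m) m = w := by
  obtain ⟨hmp, hml, -⟩ := pdel_basic hp hm
  have hA : (w.take (p+1-m)).length = p+1-m := by rw [List.length_take]; omega
  have e1 : (pdel w p m).take (p-m+1) = w.take (p+1-m) := by
    unfold pdel
    rw [show p-m+1 = p+1-m by omega, List.take_left' hA]
  have e2 : (pdel w p m).drop (p-m+1) = w.drop (p+1+m) := by
    unfold pdel
    rw [show p-m+1 = p+1-m by omega, List.drop_left' hA]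
  unfold pins
  rw [e1, e2, ← pdel_decomp hp hm, List.take_append_drop]

lemma pdel_dyck (hd : IsDyckWord w) (hp : isSymPeakB w p = true) (hm : m < peakWeight w p) :
    IsDyckWord (pdel w p m) := by
  have hlen := symPeak_len hp
  obtain ⟨hmp, hml, hL⟩ := pdel_basic hp hm
  have hpl : p - m + 1 ≤ (pdel w p m).length := by omega
  constructor
  · have h1 := count_pins_true (pdel w p m) (p-m) m (by omega)
    have h2 := count_pins_false (pdel w p m) (p-m) m (by omega)
    rw [pins_pdel hp hm] at h1 h2
    have := hd.1
    omega
  · intro j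
    have hzero : hgt w (p+1+m) = hgt w (p+1-m) := by
      have h := hgt_drop w (p+1-m) (2*m)
      rw [pdel_decomp hp hm, hgt_append, hgt_append, List.length_replicate,
        List.length_replicate, hgt_replicate_true, hgt_replicate_false] at h
      rw [show 2*m - m = m from by omega, show m - m = 0 from by omega,
        show min (2*m) m = m from by omega, show min m m = m from by omega,
        show p+1-m+2*m = p+1+m from by omega] at h
      have h0 : hgt (w.drop (p+1+m)) 0 = 0 := by simp [hgt]
      rw [h0] at h
      omega
    have ht : (List.take (p+1-m) w).length = p+1-m := by rw [List.length_take]; omega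
    have key : hgt (pdel w p m) j =
        hgt w (min j (p+1-m)) + (hgt w ((p+1+m) + (j - (p+1-m))) - hgt w (p+1+m)) := by
      unfold pdel
      rw [hgt_append, ht, hgt_take, hgt_drop]
    rw [key]
    rcases le_or_gt j (p+1-m) with hc | hc
    · rw [min_eq_left hc, show j - (p+1-m) = 0 by omega, Nat.add_zero]
      have := hd.2 j
      omega
    · rw [min_eq_right (by omega), ← hzero]
      have := hd.2 ((p+1+m) + (j - (p+1-m)))
      omega

lemma pdel_runL (hp : isSymPeakB w p = true) (hm : m < peakWeight w p) :
    upRunL (pdel w p m) (p-m) = upRunL w p - m := by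
  have hlen := symPeak_len hp
  obtain ⟨hmp, hml, hL⟩ := pdel_basic hp hm
  obtain ⟨ha1, ha2, ha3⟩ := upRunL_spec w p
  have hma : m < upRunL w p := by unfold peakWeight at hm; omega
  apply upRunL_eq
  · omega
  · intro k hk
    rw [getD_pdel_lt w p m _ (by omega) _]
    have : p - m - k = p - (m + k) := by omega
    rw [this]
    exact ha2 (m+k) (by omega)
  · intro h
    have ha : upRunL w p < p + 1 := by omega
    rw [getD_pdel_lt w p m _ (by omega) _]
    have : p - m - (upRunL w p - m) = p - upRunL w p := by omega
    rw [this]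
    exact ha3 ha

lemma pdel_runR (hp : isSymPeakB w p = true) (hm : m < peakWeight w p) :
    downRunR (pdel w p m) (p-m+1) = downRunR w (p+1) - m := by
  have hlen := symPeak_len hp
  obtain ⟨hmp, hml, hL⟩ := pdel_basic hp hm
  obtain ⟨hb1, hb2, hb3⟩ := downRunR_spec w (p+1)
  have hmb : m < downRunR w (p+1) := by unfold peakWeight at hm; omega
  apply downRunR_eq
  · rw [hL]; omega
  · intro k hk
    rw [getD_pdel_ge w p m _ hmp hml (by omega) _]
    have : p - m + 1 + k + 2*m = p + 1 + (k + m) := by omega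
    rw [this]
    exact hb2 (k+m) (by omega)
  · intro h
    rw [hL] at h
    have hb : downRunR w (p+1) < w.length - (p+1) := by omega
    rw [getD_pdel_ge w p m _ hmp hml (by omega) _]
    have : p - m + 1 + (downRunR w (p+1) - m) + 2*m = p + 1 + downRunR w (p+1) := by omega
    rw [this]
    exact hb3 hb

lemma pdel_symPeak (hp : isSymPeakB w p = true) (hm : m < peakWeight w p) :
    isSymPeakB (pdel w p m) (p-m) = true := by
  obtain ⟨hu, hd, hab⟩ := symPeak_unpack hp
  have hma : m < upRunL w p := by unfold peakWeight at hm; omega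
  have h1 : (pdel w p m).getD (p-m) false = true := by
    have := (upRunL_spec (pdel w p m) (p-m)).2.1 0 (by rw [pdel_runL hp hm]; omega)
    simpa using this
  have h2 : (pdel w p m).getD (p-m+1) true = false := by
    have := (downRunR_spec (pdel w p m) (p-m+1)).2.1 0 (by rw [pdel_runR hp hm, ← hab]; omega)
    simpa using this
  exact symPeak_pack h1 h2 (by rw [pdel_runL hp hm, pdel_runR hp hm, hab])

lemma pdel_weight (hp : isSymPeakB w p = true) (hm : m < peakWeight w p) :
    peakWeight (pdel w p m) (p-m) = peakWeight w p - m := by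
  have hab := (symPeak_unpack hp).2.2
  unfold peakWeight
  rw [pdel_runL hp hm, pdel_runR hp hm]
  unfold peakWeight at hm
  omega

lemma dyck_len (hd : IsDyckWord w) : w.length = 2 * w.count true := by
  have := count_true_add_count_false w
  have := hd.1
  omega

lemma pdel_ins (hp : p + 1 ≤ w.length) : pdel (pins w p m) (p+m) m = w := by
  have hA : (w.take (p+1)).length = p+1 := by rw [List.length_take]; omega
  unfold pdel pins
  rw [show p+m+1-m = p+1 by omega]
  rw [List.take_left' hA]
  rw [show p+m+1+m = p+1+(m+m) by omega]
  rw [List.drop_append]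
  rw [List.drop_eq_nil_of_le (by omega : (w.take (p+1)).length ≤ p+1+(m+m)), List.nil_append, hA]
  rw [List.drop_append, List.length_replicate]
  rw [List.drop_eq_nil_of_le (by rw [List.length_replicate]; omega), List.nil_append]
  rw [List.drop_append, List.length_replicate]
  rw [List.drop_eq_nil_of_le (by rw [List.length_replicate]; omega), List.nil_append]
  rw [show p+1+(m+m)-(p+1)-m-m = 0 from by omega, List.drop_zero, List.take_append_drop]

end SPB

/-- There is a bijection between pairs `(D, P)` where `D` is a
Dyck path of semilength at most `n` with a distinguished symmetric peak `P`, and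
triples `(D', P', i)` where `D'` is a Dyck path of semilength exactly `n` with a
distinguished symmetric peak `P'` and `1 ≤ i ≤ weight of P'` (realized by
inserting a pyramid `u^{n−k} d^{n−k}` at the top of the distinguished peak). -/

theorem symmetric_peak_weight_bijection (n : ℕ) :
    Nonempty
      ({p : List Bool × ℕ //
          IsDyckWord p.1 ∧ p.1.length ≤ 2 * n ∧ isSymPeakB p.1 p.2 = true} ≃
       {q : List Bool × ℕ × ℕ //
          IsDyckWord q.1 ∧ q.1.length = 2 * n ∧ isSymPeakB q.1 q.2.1 = true ∧
          1 ≤ q.2.2 ∧ q.2.2 ≤ peakWeight q.1 q.2.1}) := by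
  classical
  refine ⟨⟨
    fun x => ⟨(pins x.1.1 x.1.2 (n - x.1.1.count true),
      x.1.2 + (n - x.1.1.count true), peakWeight x.1.1 x.1.2), ?_⟩,
    fun q => ⟨(pdel q.1.1 q.1.2.1 (peakWeight q.1.1 q.1.2.1 - q.1.2.2),
      q.1.2.1 - (peakWeight q.1.1 q.1.2.1 - q.1.2.2)), ?_⟩,
    ?_, ?_⟩⟩
  · -- toFun well-defined
    obtain ⟨⟨w, p⟩, hx⟩ := x
    replace hx : IsDyckWord w ∧ w.length ≤ 2*n ∧ isSymPeakB w p = true := hx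
    obtain ⟨hd, hlen, hp⟩ := hx
    show IsDyckWord (pins w p (n - w.count true)) ∧
      (pins w p (n - w.count true)).length = 2*n ∧
      isSymPeakB (pins w p (n - w.count true)) (p + (n - w.count true)) = true ∧
      1 ≤ peakWeight w p ∧
      peakWeight w p ≤ peakWeight (pins w p (n - w.count true)) (p + (n - w.count true))
    have hplen := SPB.symPeak_len hp
    have hcl := SPB.dyck_len hd
    refine ⟨SPB.pins_dyck _ hd hp, ?_, SPB.pins_symPeak _ hp, SPB.symPeak_weight_pos hp, ?_⟩
    · rw [SPB.length_pins w p _ (by omega)]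
      omega
    · rw [SPB.pins_weight _ hp]
      omega
  · -- invFun well-defined
    obtain ⟨⟨w', p', i⟩, hq⟩ := q
    replace hq : IsDyckWord w' ∧ w'.length = 2*n ∧ isSymPeakB w' p' = true ∧
      1 ≤ i ∧ i ≤ peakWeight w' p' := hq
    obtain ⟨hd, hlen, hp, hi1, hi2⟩ := hq
    show IsDyckWord (pdel w' p' (peakWeight w' p' - i)) ∧
      (pdel w' p' (peakWeight w' p' - i)).length ≤ 2*n ∧
      isSymPeakB (pdel w' p' (peakWeight w' p' - i)) (p' - (peakWeight w' p' - i)) = true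
    have hm : peakWeight w' p' - i < peakWeight w' p' := by omega
    obtain ⟨hmp, hml, hL⟩ := SPB.pdel_basic hp hm
    exact ⟨SPB.pdel_dyck hd hp hm, by omega, SPB.pdel_symPeak hp hm⟩
  · -- left inverse
    rintro ⟨⟨w, p⟩, hx⟩
    replace hx : IsDyckWord w ∧ w.length ≤ 2*n ∧ isSymPeakB w p = true := hx
    obtain ⟨hd, hlen, hp⟩ := hx
    apply Subtype.ext
    show (pdel (pins w p (n - w.count true)) (p + (n - w.count true))
        (peakWeight (pins w p (n - w.count true)) (p + (n - w.count true)) - peakWeight w p),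
      p + (n - w.count true) -
        (peakWeight (pins w p (n - w.count true)) (p + (n - w.count true)) - peakWeight w p))
      = (w, p)
    have hplen := SPB.symPeak_len hp
    rw [SPB.pins_weight _ hp, Nat.add_sub_cancel_left, SPB.pdel_ins (by omega),
      Nat.add_sub_cancel]
  · -- right inverse
    rintro ⟨⟨w', p', i⟩, hq⟩
    replace hq : IsDyckWord w' ∧ w'.length = 2*n ∧ isSymPeakB w' p' = true ∧
      1 ≤ i ∧ i ≤ peakWeight w' p' := hq
    obtain ⟨hd, hlen, hp, hi1, hi2⟩ := hq
    apply Subtype.ext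
    show (pins (pdel w' p' (peakWeight w' p' - i)) (p' - (peakWeight w' p' - i))
        (n - (pdel w' p' (peakWeight w' p' - i)).count true),
      p' - (peakWeight w' p' - i) + (n - (pdel w' p' (peakWeight w' p' - i)).count true),
      peakWeight (pdel w' p' (peakWeight w' p' - i)) (p' - (peakWeight w' p' - i)))
      = (w', p', i)
    have hm : peakWeight w' p' - i < peakWeight w' p' := by omega
    obtain ⟨hmp, hml, hL⟩ := SPB.pdel_basic hp hm
    have hins := SPB.pins_pdel hp hm
    have hcl := SPB.dyck_len hd
    have hcnt : (pdel w' p' (peakWeight w' p' - i)).count true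
        = w'.count true - (peakWeight w' p' - i) := by
      have h := SPB.count_pins_true (pdel w' p' (peakWeight w' p' - i))
        (p' - (peakWeight w' p' - i)) (peakWeight w' p' - i) (by omega)
      rw [hins] at h
      omega
    rw [hcnt, show n - (w'.count true - (peakWeight w' p' - i)) = peakWeight w' p' - i
      from by omega]
    rw [hins, show p' - (peakWeight w' p' - i) + (peakWeight w' p' - i) = p' from by omega]
    rw [SPB.pdel_weight hp hm,
      show peakWeight w' p' - (peakWeight w' p' - i) = i from by omega]
end

section
/- The generating function for Dyck paths with no pair of consecutive valleys at the same height is (1 − z² − √((1−z)(1 − 3z − z² − z³))) / (2z(1−z)), and this equals the generating function for Dyck paths avoiding the consecutive subpath uudu. -/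
namespace GFAux

def bal (l : List Bool) : ℤ := (l.count true : ℤ) - (l.count false : ℤ)

@[simp] lemma bal_nil : bal [] = 0 := by simp [bal]

@[simp] lemma bal_cons (b : Bool) (t : List Bool) :
    bal (b :: t) = (if b then 1 else -1) + bal t := by
  cases b <;> simp [bal, List.count_cons] <;> ring

@[simp] lemma bal_append (x y : List Bool) : bal (x ++ y) = bal x + bal y := by
  simp [bal, List.count_append]; ring

lemma hgt_eq (w : List Bool) (j : ℕ) : hgt w j = bal (w.take j) := rfl

lemma isDyck_iff (w : List Bool) :
    IsDyckWord w ↔ bal w = 0 ∧ ∀ p, p <+: w → 0 ≤ bal p := by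
  constructor
  · rintro ⟨h1, h2⟩
    constructor
    · simp [bal, h1]
    · intro p hp
      obtain ⟨t, rfl⟩ := hp
      have := h2 p.length
      rwa [hgt_eq, List.take_left] at this
  · rintro ⟨h1, h2⟩
    constructor
    · have : bal w = 0 := h1
      simp only [bal, sub_eq_zero] at this
      exact_mod_cast this
    · intro j
      rw [hgt_eq]
      exact h2 _ (List.take_prefix _ _)

lemma isDyck_bal {w : List Bool} (h : IsDyckWord w) : bal w = 0 :=
  ((isDyck_iff w).mp h).1

lemma isDyck_prefix {w : List Bool} (h : IsDyckWord w) {p : List Bool} (hp : p <+: w) :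
    0 ≤ bal p := ((isDyck_iff w).mp h).2 p hp

lemma length_eq_counts (l : List Bool) : l.length = l.count true + l.count false := by
  induction l with
  | nil => simp
  | cons b t ih =>
    cases b <;> (simp only [List.count_cons, List.length_cons]; simp; omega)

lemma isDyck_length_even {w : List Bool} (h : IsDyckWord w) :
    w.length = 2 * w.count true := by
  have h1 := h.1
  rw [length_eq_counts, h1]; ring

lemma mem_boolLists {w : List Bool} {m : ℕ} : w ∈ boolLists m ↔ w.length = m := by
  constructor
  · intro hw
    simp only [boolLists, Finset.mem_image] at hw
    obtain ⟨f, _, rfl⟩ := hw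
    simp
  · intro hw
    simp only [boolLists, Finset.mem_image]
    subst hw
    exact ⟨fun i => w.get i, Finset.mem_univ _, List.ofFn_get w⟩

lemma mem_dyckFinset {w : List Bool} {n : ℕ} :
    w ∈ dyckFinset n ↔ IsDyckWord w ∧ w.length = 2 * n := by
  simp only [dyckFinset, Finset.mem_filter, mem_boolLists]
  tauto


/-! ### Decomposition of Dyck words -/

def dw (A B : List Bool) : List Bool := true :: (A ++ false :: B)

lemma dw_length (A B : List Bool) : (dw A B).length = A.length + B.length + 2 := by
  simp [dw]; omega

lemma prefix_append_cons {α : Type*} : ∀ {x : List α} {p : List α} {b : α} {y : List α},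
    p <+: x ++ b :: y → p <+: x ∨ ∃ r, r <+: y ∧ p = x ++ b :: r := by
  intro x
  induction x with
  | nil =>
    intro p b y hp
    cases p with
    | nil => exact Or.inl List.nil_prefix
    | cons c q =>
      rw [List.nil_append, List.cons_prefix_cons] at hp
      exact Or.inr ⟨q, hp.2, by rw [hp.1]; simp⟩
  | cons a x' ih =>
    intro p b y hp
    cases p with
    | nil => exact Or.inl List.nil_prefix
    | cons c q =>
      rw [List.cons_append, List.cons_prefix_cons] at hp
      rcases ih hp.2 with h | ⟨r, hr, rfl⟩
      · exact Or.inl (List.cons_prefix_cons.mpr ⟨hp.1, h⟩)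
      · exact Or.inr ⟨r, hr, by rw [hp.1]; simp⟩

lemma isDyck_dw {A B : List Bool} (hA : IsDyckWord A) (hB : IsDyckWord B) :
    IsDyckWord (dw A B) := by
  rw [isDyck_iff] at hA hB ⊢
  constructor
  · simp [dw, hA.1, hB.1]
  · intro p hp
    unfold dw at hp
    cases p with
    | nil => simp
    | cons c q =>
      rw [List.cons_prefix_cons] at hp
      obtain ⟨rfl, hq⟩ := hp
      rcases prefix_append_cons hq with h | ⟨r, hr, rfl⟩
      · have := hA.2 q h
        simp only [bal_cons]
        simp
        omega
      · have := hB.2 r hr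
        simp [hA.1]
        omega

lemma isDyck_dw_inj {A B A' B' : List Bool} (hA : IsDyckWord A) (hA' : IsDyckWord A')
    (h : dw A B = dw A' B') : A = A' ∧ B = B' := by
  unfold dw at h
  rw [List.cons_eq_cons] at h
  have h2 := h.2
  rw [List.append_eq_append_iff] at h2
  rcases h2 with ⟨a', ha1, ha2⟩ | ⟨c', hc1, hc2⟩
  · cases a' with
    | nil =>
      simp at ha1 ha2
      exact ⟨ha1.symm, ha2⟩
    | cons x a'' =>
      rw [List.cons_append, List.cons_eq_cons] at ha2
      obtain ⟨rfl, _⟩ := ha2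
      exfalso
      have hpre : A ++ [false] <+: A' := ⟨a'', by rw [ha1]; simp⟩
      have h0 := isDyck_prefix hA' hpre
      have hbA : bal A = 0 := isDyck_bal hA
      simp [hbA] at h0
  · cases c' with
    | nil =>
      simp at hc1 hc2
      exact ⟨hc1, hc2.symm⟩
    | cons x c'' =>
      rw [List.cons_append, List.cons_eq_cons] at hc2
      obtain ⟨rfl, _⟩ := hc2
      exfalso
      have hpre : A' ++ [false] <+: A := ⟨c'', by rw [hc1]; simp⟩
      have h0 := isDyck_prefix hA hpre
      have hbA' : bal A' = 0 := isDyck_bal hA'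
      simp [hbA'] at h0

lemma dyck_split : ∀ (n : ℕ) (t : List Bool), t.length ≤ n → bal t < 0 →
    (∀ p, p <+: t → bal t ≤ bal p) →
    ∃ A B, t = A ++ false :: B ∧ bal A = 0 ∧ (∀ p, p <+: A → 0 ≤ bal p) := by
  intro n
  induction n with
  | zero =>
    intro t ht hb _
    rw [Nat.le_zero, List.length_eq_zero_iff] at ht
    subst ht; simp at hb
  | succ n ih =>
    intro t ht hb hp
    cases t with
    | nil => simp at hb
    | cons c t' =>
      cases c with
      | false =>
        exact ⟨[], t', rfl, rfl, by intro p hp'; simp [List.prefix_nil.mp hp']⟩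
      | true =>
        have hbc : bal (true :: t') = 1 + bal t' := by simp
        have hb' : bal t' < 0 := by omega
        have hp' : ∀ p, p <+: t' → bal t' ≤ bal p := by
          intro p hpp
          have h1 := hp (true :: p) (List.cons_prefix_cons.mpr ⟨rfl, hpp⟩)
          have h2 : bal (true :: p) = 1 + bal p := by simp
          omega
        have hlt : t'.length ≤ n := by
          simp only [List.length_cons] at ht; omega
        obtain ⟨A', B', rfl, hbA', hpA'⟩ := ih t' hlt hb' hp'
        have hbB' : bal B' < 0 := by
          have : bal (A' ++ false :: B') = bal B' - 1 := by simp [hbA']; ring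
          omega
        have hpB' : ∀ p, p <+: B' → bal B' ≤ bal p := by
          intro p hpp
          have h1 := hp' (A' ++ false :: p)
            ((List.prefix_append_right_inj A').mpr (List.cons_prefix_cons.mpr ⟨rfl, hpp⟩))
          have h2 : bal (A' ++ false :: p) = bal p - 1 := by simp [hbA']; ring
          have h3 : bal (A' ++ false :: B') = bal B' - 1 := by simp [hbA']; try ring
          omega
        have hlB : B'.length ≤ n := by
          simp only [List.length_cons, List.length_append] at ht ⊢; omega
        obtain ⟨A'', B'', rfl, hbA'', hpA''⟩ := ih B' hlB hbB' hpB'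
        have hbal0 : bal (true :: (A' ++ false :: A'')) = 0 := by simp [hbA', hbA'']; try ring
        refine ⟨true :: (A' ++ false :: A''), B'', by simp, hbal0, ?_⟩
        intro p hpp
        cases p with
        | nil => simp
        | cons c q =>
          rw [List.cons_prefix_cons] at hpp
          obtain ⟨rfl, hq⟩ := hpp
          have hcq : bal (true :: q) = 1 + bal q := by simp
          rcases prefix_append_cons hq with h | ⟨r, hr, rfl⟩
          · have := hpA' q h; omega
          · have := hpA'' r hr
            have : bal (A' ++ false :: r) = bal r - 1 := by simp [hbA']; ring
            omega

lemma isDyck_decomp {w : List Bool} (h : IsDyckWord w) (hne : w ≠ []) :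
    ∃ A B, IsDyckWord A ∧ IsDyckWord B ∧ w = dw A B := by
  rw [isDyck_iff] at h
  obtain ⟨hb, hp⟩ := h
  cases w with
  | nil => exact absurd rfl hne
  | cons c t =>
    have hc : c = true := by
      have := hp [c] ⟨t, rfl⟩
      cases c
      · exfalso; simp [bal] at this
      · rfl
    subst hc
    have hbc : bal (true :: t) = 1 + bal t := by simp
    have hbt : bal t < 0 := by omega
    have hpt : ∀ p, p <+: t → bal t ≤ bal p := by
      intro p hpp
      have h1 := hp (true :: p) (List.cons_prefix_cons.mpr ⟨rfl, hpp⟩)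
      have h2 : bal (true :: p) = 1 + bal p := by simp
      omega
    obtain ⟨A, B, rfl, hbA, hpA⟩ := dyck_split t.length t le_rfl hbt hpt
    have hABB : bal (A ++ false :: B) = bal B - 1 := by simp [hbA]; ring
    have hbB : bal B = 0 := by omega
    have hpB : ∀ p, p <+: B → 0 ≤ bal p := by
      intro p hpp
      have h1 := hp (true :: (A ++ false :: p)) (List.cons_prefix_cons.mpr
        ⟨rfl, (List.prefix_append_right_inj A).mpr (List.cons_prefix_cons.mpr ⟨rfl, hpp⟩)⟩)
      have h2 : bal (true :: (A ++ false :: p)) = bal p := by simp [hbA]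
      omega
    exact ⟨A, B, (isDyck_iff A).mpr ⟨hbA, hpA⟩, (isDyck_iff B).mpr ⟨hbB, hpB⟩, rfl⟩

lemma dw_mem {A B : List Bool} {k m : ℕ} (hA : A ∈ dyckFinset k) (hB : B ∈ dyckFinset m) :
    dw A B ∈ dyckFinset (k + m + 1) := by
  rw [mem_dyckFinset] at hA hB ⊢
  exact ⟨isDyck_dw hA.1 hB.1, by rw [dw_length, hA.2, hB.2]; ring⟩

lemma dyck_decomp_mem {w : List Bool} {n : ℕ} (hw : w ∈ dyckFinset (n + 1)) :
    ∃ k, k ≤ n ∧ ∃ A B, A ∈ dyckFinset k ∧ B ∈ dyckFinset (n - k) ∧ w = dw A B := by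
  rw [mem_dyckFinset] at hw
  obtain ⟨hd, hl⟩ := hw
  have hne : w ≠ [] := by
    intro h; rw [h] at hl; simp at hl
  obtain ⟨A, B, hA, hB, rfl⟩ := isDyck_decomp hd hne
  have hlA : A.length = 2 * A.count true := isDyck_length_even hA
  have hlB : B.length = 2 * B.count true := isDyck_length_even hB
  have hlw : A.length + B.length + 2 = 2 * (n + 1) := by rw [← dw_length]; exact hl
  refine ⟨A.count true, by omega, A, B, ?_, ?_, rfl⟩
  · rw [mem_dyckFinset]; exact ⟨hA, hlA⟩
  · rw [mem_dyckFinset]; exact ⟨hB, by omega⟩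

lemma count_decomp (P Q C : List Bool → Prop) [DecidablePred P] [DecidablePred Q]
    [DecidablePred C]
    (hC : ∀ A B, IsDyckWord A → IsDyckWord B → (C (dw A B) ↔ P A ∧ Q B)) (n : ℕ) :
    ((dyckFinset (n+1)).filter C).card
      = ∑ k ∈ Finset.range (n+1),
          ((dyckFinset k).filter P).card * ((dyckFinset (n-k)).filter Q).card := by
  classical
  have : ∑ k ∈ Finset.range (n+1),
      ((dyckFinset k).filter P).card * ((dyckFinset (n-k)).filter Q).card
      = ((Finset.range (n+1)).sigma
          (fun k => ((dyckFinset k).filter P) ×ˢ ((dyckFinset (n-k)).filter Q))).card := by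
    rw [Finset.card_sigma]
    exact Finset.sum_congr rfl (fun k _ => (Finset.card_product _ _).symm)
  rw [this]
  symm
  apply Finset.card_bij (fun x _ => dw x.2.1 x.2.2)
  · rintro ⟨k, A, B⟩ hx
    simp only [Finset.mem_sigma, Finset.mem_product, Finset.mem_filter, Finset.mem_range] at hx
    obtain ⟨hk, ⟨hAm, hAP⟩, ⟨hBm, hBQ⟩⟩ := hx
    have hmem := dw_mem hAm hBm
    have hkm : k + (n - k) + 1 = n + 1 := by omega
    rw [hkm] at hmem
    rw [Finset.mem_filter]
    refine ⟨hmem, ?_⟩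
    rw [hC A B (mem_dyckFinset.mp hAm).1 (mem_dyckFinset.mp hBm).1]
    exact ⟨hAP, hBQ⟩
  · rintro ⟨k, A, B⟩ hx ⟨k', A', B'⟩ hy hxy
    simp only [Finset.mem_sigma, Finset.mem_product, Finset.mem_filter, Finset.mem_range] at hx hy
    have hAB := isDyck_dw_inj (mem_dyckFinset.mp hx.2.1.1).1 (mem_dyckFinset.mp hy.2.1.1).1 hxy
    obtain ⟨hA, hB⟩ := hAB
    have hkk : k = k' := by
      have h1 := (mem_dyckFinset.mp hx.2.1.1).2
      have h2 := (mem_dyckFinset.mp hy.2.1.1).2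
      rw [hA] at h1; omega
    subst hkk; subst hA; subst hB; rfl
  · intro w hw
    rw [Finset.mem_filter] at hw
    obtain ⟨k, hk, A, B, hAm, hBm, rfl⟩ := dyck_decomp_mem hw.1
    have hPQ := (hC A B (mem_dyckFinset.mp hAm).1 (mem_dyckFinset.mp hBm).1).mp hw.2
    refine ⟨⟨k, A, B⟩, ?_, rfl⟩
    simp only [Finset.mem_sigma, Finset.mem_product, Finset.mem_filter, Finset.mem_range]
    exact ⟨by omega, ⟨hAm, hPQ.1⟩, ⟨hBm, hPQ.2⟩⟩
/-! ### Valley heights, recursively -/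

def myVH : List Bool → ℤ → List ℤ
  | [], _ => []
  | b :: t, h =>
    (if b = false ∧ t.getD 0 false = true then [h + (if b then 1 else -1)] else [])
      ++ myVH t (h + (if b then 1 else -1))

@[simp] lemma myVH_nil (h : ℤ) : myVH [] h = [] := rfl

lemma myVH_cons (b : Bool) (t : List Bool) (h : ℤ) :
    myVH (b :: t) h =
      (if b = false ∧ t.getD 0 false = true then [h + (if b then 1 else -1)] else [])
        ++ myVH t (h + (if b then 1 else -1)) := rfl

lemma myVH_shift : ∀ (t : List Bool) (h c : ℤ), myVH t (h + c) = (myVH t h).map (· + c) := by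
  intro t
  induction t with
  | nil => intro h c; simp
  | cons b t ih =>
    intro h c
    rw [myVH_cons, myVH_cons, List.map_append]
    congr 1
    · by_cases hc : b = false ∧ t.getD 0 false = true
      · rw [if_pos hc, if_pos hc]
        simp only [List.map_cons, List.map_nil]
        congr 1
        ring
      · rw [if_neg hc, if_neg hc]
        rfl
    · rw [← ih]
      congr 1
      ring

lemma hgt_cons (b : Bool) (t : List Bool) (j : ℕ) :
    hgt (b :: t) (j + 1) = (if b then 1 else -1) + hgt t j := by
  rw [hgt_eq, hgt_eq, List.take_succ_cons, bal_cons]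

lemma isValleyB_cons_succ (b : Bool) (t : List Bool) (i : ℕ) :
    isValleyB (b :: t) (i + 1) = isValleyB t i := by
  simp [isValleyB]

lemma isValleyB_cons_zero (b : Bool) (t : List Bool) :
    isValleyB (b :: t) 0 = true ↔ (b = false ∧ t.getD 0 false = true) := by
  cases b <;> simp [isValleyB]

lemma valleyList_cons (b : Bool) (t : List Bool) :
    valleyList (b :: t) =
      (if isValleyB (b :: t) 0 then [0] else []) ++ (valleyList t).map Nat.succ := by
  unfold valleyList
  rw [List.length_cons, List.range_succ_eq_map, List.filter_cons]
  have h2 : ((List.range t.length).map Nat.succ).filter (isValleyB (b :: t))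
      = ((List.range t.length).filter (isValleyB t)).map Nat.succ := by
    rw [List.filter_map]
    have h3 : isValleyB (b :: t) ∘ Nat.succ = isValleyB t := by
      funext i
      exact isValleyB_cons_succ b t i
    rw [h3]
  rw [h2]
  by_cases hv : isValleyB (b :: t) 0 = true
  · rw [if_pos hv, if_pos hv]; rfl
  · rw [if_neg hv, if_neg hv]; rfl

lemma valleyHeights_cons (b : Bool) (t : List Bool) :
    valleyHeights (b :: t) =
      (if b = false ∧ t.getD 0 false = true then [(if b then 1 else -1)] else [])
        ++ (valleyHeights t).map (· + (if b then 1 else -1)) := by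
  unfold valleyHeights
  rw [valleyList_cons, List.map_append, List.map_map]
  have hmap : (valleyList t).map ((fun i => hgt (b :: t) (i + 1)) ∘ Nat.succ)
      = ((valleyList t).map (fun i => hgt t (i + 1))).map (· + (if b then 1 else -1)) := by
    rw [List.map_map]
    congr 1
    funext i
    simp only [Function.comp_apply]
    rw [show Nat.succ i + 1 = (i + 1) + 1 from rfl, hgt_cons]
    ring
  rw [hmap]
  congr 1
  by_cases hc : b = false ∧ t.getD 0 false = true
  · rw [if_pos ((isValleyB_cons_zero b t).mpr hc), if_pos hc]
    have h1 : hgt (b :: t) 1 = (if b then 1 else -1) := by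
      rw [show (1 : ℕ) = 0 + 1 from rfl, hgt_cons]
      simp [hgt]
    simp [h1]
  · rw [if_neg (fun hh => hc ((isValleyB_cons_zero b t).mp hh)), if_neg hc]
    rfl

lemma valleyHeights_eq_myVH (w : List Bool) : valleyHeights w = myVH w 0 := by
  induction w with
  | nil => simp [valleyHeights, valleyList]
  | cons b t ih =>
    rw [valleyHeights_cons, myVH_cons, ih]
    congr 1
    · by_cases hc : b = false ∧ t.getD 0 false = true
      · rw [if_pos hc, if_pos hc]; norm_num
      · rw [if_neg hc, if_neg hc]
    · rw [show (0 : ℤ) + (if b then 1 else -1) = 0 + (if b then 1 else -1) from rfl,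
        myVH_shift]

lemma myVH_append (x y : List Bool) (hy : y.getD 0 false = false) :
    ∀ h : ℤ, myVH (x ++ y) h = myVH x h ++ myVH y (h + bal x) := by
  induction x with
  | nil => intro h; simp
  | cons b t ih =>
    intro h
    rw [List.cons_append, myVH_cons, myVH_cons, ih, List.append_assoc]
    have hhd : (t ++ y).getD 0 false = t.getD 0 false := by
      cases t
      · simpa using hy
      · simp
    rw [hhd]
    congr 2
    rw [bal_cons]
    ring

lemma isDyck_head {c : Bool} {t : List Bool} (h : IsDyckWord (c :: t)) : c = true := by
  have := isDyck_prefix h (show [c] <+: c :: t from ⟨t, rfl⟩)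
  cases c
  · exfalso; simp [bal] at this
  · rfl

/-- valley heights of the standard decomposition. -/
lemma valleyHeights_dw {A B : List Bool} (hA : IsDyckWord A) (hB : IsDyckWord B) :
    valleyHeights (dw A B) =
      (valleyHeights A).map (· + 1)
        ++ (if B = [] then [] else 0 :: valleyHeights B) := by
  rw [valleyHeights_eq_myVH]
  have h0 : myVH (dw A B) 0 = myVH (A ++ false :: B) 1 := by
    rw [show dw A B = true :: (A ++ false :: B) from rfl, myVH_cons]
    norm_num
  rw [h0, myVH_append A (false :: B) (by simp) 1, isDyck_bal hA, add_zero]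
  congr 1
  · rw [show (1 : ℤ) = 0 + 1 by ring, myVH_shift, ← valleyHeights_eq_myVH]
    norm_num
  · rw [myVH_cons]
    cases B with
    | nil => simp
    | cons c B' =>
      have hc := isDyck_head hB
      subst hc
      rw [if_pos (by simp)]
      norm_num
      rw [← valleyHeights_eq_myVH]
      simp

/-- valley heights of a Dyck word are nonnegative -/
lemma valleyHeights_nonneg {w : List Bool} (h : IsDyckWord w) :
    ∀ v ∈ valleyHeights w, 0 ≤ v := by
  intro v hv
  unfold valleyHeights at hv
  rw [List.mem_map] at hv
  obtain ⟨i, _, rfl⟩ := hv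
  exact h.2 (i + 1)

lemma eqAdjCount_eq_zero_iff : ∀ l : List ℤ, eqAdjCount l = 0 ↔ l.Chain' (· ≠ ·) := by
  intro l
  induction l with
  | nil => simp [eqAdjCount, List.Chain']
  | cons a t ih =>
    cases t with
    | nil => simp [eqAdjCount, List.Chain']
    | cons b t' =>
      have key : eqAdjCount (a :: b :: t') = (if a = b then 1 else 0) + eqAdjCount (b :: t') := by
        unfold eqAdjCount
        simp only [List.tail_cons, List.zip_cons_cons, List.filter_cons]
        by_cases hab : a = b <;> simp [hab] <;> omega
      rw [key]
      unfold List.Chain' at ih ⊢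
      rw [List.isChain_cons_cons, ← ih]
      by_cases hab : a = b <;> simp [hab]

lemma spPrime_eq_zero_iff (w : List Bool) :
    spPrime w = 0 ↔ (valleyHeights w).Chain' (· ≠ ·) := by
  unfold spPrime
  exact eqAdjCount_eq_zero_iff _
/-! ### Good predicates -/

def GGood (w : List Bool) : Prop := spPrime w = 0 ∧ (valleyHeights w).head? ≠ some 0
def Fv0 (w : List Bool) : Prop := spPrime w = 0 ∧ (valleyHeights w).head? = some 0

instance : DecidablePred GGood := fun w => by unfold GGood; infer_instance
instance : DecidablePred Fv0 := fun w => by unfold Fv0; infer_instance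

@[simp] lemma valleyHeights_nil : valleyHeights [] = [] := by
  simp [valleyHeights, valleyList]

@[simp] lemma spPrime_nil : spPrime [] = 0 := by
  simp [spPrime, eqAdjCount]

lemma chain'_map_add_one (l : List ℤ) :
    (l.map (· + 1)).Chain' (· ≠ ·) ↔ l.Chain' (· ≠ ·) := by
  unfold List.Chain'
  rw [List.isChain_map]
  constructor <;> intro h <;> refine h.imp ?_ <;> intro a b <;> omega

lemma spPrime_dw {A B : List Bool} (hA : IsDyckWord A) (hB : IsDyckWord B) :
    spPrime (dw A B) = 0 ↔ spPrime A = 0 ∧ GGood B := by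
  rw [spPrime_eq_zero_iff, valleyHeights_dw hA hB]
  unfold GGood
  rw [spPrime_eq_zero_iff A, spPrime_eq_zero_iff B]
  by_cases hBe : B = []
  · subst hBe
    rw [if_pos rfl, List.append_nil, chain'_map_add_one]
    simp [List.Chain']
  · have hm := chain'_map_add_one (valleyHeights A)
    unfold List.Chain' at hm ⊢
    rw [if_neg hBe, List.isChain_append, hm, List.isChain_cons]
    have hbd : ∀ x ∈ ((valleyHeights A).map (· + 1)).getLast?,
        ∀ y ∈ ((0 : ℤ) :: valleyHeights B).head?, x ≠ y := by
      intro x hx y hy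
      simp only [List.head?_cons, Option.mem_some_iff] at hy
      subst hy
      rw [List.getLast?_map, Option.mem_def, Option.map_eq_some_iff] at hx
      obtain ⟨v, hv, rfl⟩ := hx
      have := valleyHeights_nonneg hA v (List.mem_of_mem_getLast? (Option.mem_def.mpr hv))
      simp only [Ne]
      omega
    have hhd : (∀ y ∈ (valleyHeights B).head?, (0 : ℤ) ≠ y)
        ↔ (valleyHeights B).head? ≠ some 0 := by
      cases valleyHeights B <;> simp [eq_comm]
    constructor
    · rintro ⟨h1, ⟨h2, h3⟩, _⟩
      exact ⟨h1, h3, hhd.mp h2⟩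
    · rintro ⟨h1, h2, h3⟩
      exact ⟨h1, ⟨hhd.mpr h3, h2⟩, hbd⟩

lemma fv0_dw {A B : List Bool} (hA : IsDyckWord A) (hB : IsDyckWord B) :
    Fv0 (dw A B) ↔ valleyHeights A = [] ∧ (B ≠ [] ∧ GGood B) := by
  unfold Fv0
  rw [spPrime_dw hA hB, valleyHeights_dw hA hB]
  by_cases hBe : B = []
  · subst hBe
    rw [if_pos rfl, List.append_nil]
    cases hvA : valleyHeights A with
    | nil => simp
    | cons v l =>
      have hv := valleyHeights_nonneg hA v (by rw [hvA]; exact List.mem_cons_self)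
      simp only [List.map_cons, List.head?_cons]
      constructor
      · rintro ⟨-, hh⟩
        exfalso
        rw [Option.some_inj] at hh
        omega
      · rintro ⟨-, h, -⟩
        exact absurd rfl h
  · rw [if_neg hBe]
    cases hvA : valleyHeights A with
    | nil =>
      simp only [List.map_nil, List.nil_append, List.head?_cons]
      have hchA : spPrime A = 0 := by
        rw [spPrime_eq_zero_iff, hvA]; exact List.isChain_nil
      constructor
      · rintro ⟨⟨-, hg⟩, -⟩
        exact ⟨by trivial, hBe, hg⟩
      · rintro ⟨-, -, hg⟩
        exact ⟨⟨hchA, hg⟩, by trivial⟩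
    | cons v l =>
      have hv := valleyHeights_nonneg hA v (by rw [hvA]; exact List.mem_cons_self)
      simp only [List.map_cons, List.cons_append, List.head?_cons]
      constructor
      · rintro ⟨-, hh⟩
        exfalso
        rw [Option.some_inj] at hh
        omega
      · rintro ⟨h, -⟩
        exact absurd h (by simp)

/-! ### Pyramids -/

def pyr (k : ℕ) : List Bool := List.replicate k true ++ List.replicate k false

@[simp] lemma bal_replicate_true (i : ℕ) : bal (List.replicate i true) = i := by
  induction i with
  | zero => simp
  | succ i ih => rw [List.replicate_succ, bal_cons, ih]; simp; ring

@[simp] lemma bal_replicate_false (j : ℕ) : bal (List.replicate j false) = -(j : ℤ) := by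
  induction j with
  | zero => simp
  | succ j ih =>
    rw [List.replicate_succ, bal_cons, ih]
    push_cast
    norm_num

lemma isDyck_pyr (k : ℕ) : IsDyckWord (pyr k) := by
  rw [isDyck_iff]
  constructor
  · simp [pyr]
  · intro p hp
    rw [List.prefix_iff_eq_take.mp hp]
    unfold pyr
    rw [List.take_append, List.take_replicate, List.take_replicate]
    simp only [bal_append, bal_replicate_true, bal_replicate_false, List.length_replicate]
    omega

lemma myVH_rep_true (i : ℕ) (l : List Bool) :
    ∀ h : ℤ, myVH (List.replicate i true ++ l) h = myVH l (h + i) := by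
  induction i with
  | zero => intro h; simp
  | succ i ih =>
    intro h
    rw [List.replicate_succ, List.cons_append, myVH_cons]
    rw [if_neg (by simp)]
    have harith : (h + (if (true : Bool) then (1:ℤ) else -1)) + (i : ℤ) = h + ((i : ℤ) + 1) := by
      simp
      ring
    rw [List.nil_append, ih, harith]
    norm_num

lemma myVH_rep_false (j : ℕ) : ∀ h : ℤ, myVH (List.replicate j false) h = [] := by
  induction j with
  | zero => intro h; simp
  | succ j ih =>
    intro h
    rw [List.replicate_succ, myVH_cons, ih]
    rw [if_neg ?_]
    · simp
    · cases j with
      | zero => simp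
      | succ j' => rw [List.replicate_succ]; simp

lemma valleyHeights_pyr (k : ℕ) : valleyHeights (pyr k) = [] := by
  rw [valleyHeights_eq_myVH, pyr, myVH_rep_true, myVH_rep_false]

lemma no_valley_shape : ∀ (w : List Bool) (h : ℤ), myVH w h = [] →
    ∃ i j, w = List.replicate i true ++ List.replicate j false := by
  intro w
  induction w with
  | nil => exact fun _ _ => ⟨0, 0, rfl⟩
  | cons b t ih =>
    intro h hv
    rw [myVH_cons] at hv
    rw [List.append_eq_nil_iff] at hv
    obtain ⟨hv1, hv2⟩ := hv
    obtain ⟨i, j, rfl⟩ := ih _ hv2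
    cases b with
    | true =>
      exact ⟨i + 1, j, by rw [List.replicate_succ, List.cons_append]⟩
    | false =>
      have hi : i = 0 := by
        by_contra hne
        cases i with
        | zero => exact hne rfl
        | succ i' =>
          rw [if_pos ⟨rfl, by rw [List.replicate_succ]; simp⟩] at hv1
          simp at hv1
      subst hi
      refine ⟨0, j + 1, ?_⟩
      rw [List.replicate_succ]
      simp
lemma pyr_count (k : ℕ) :
    ((dyckFinset k).filter (fun A => valleyHeights A = [])).card = 1 := by
  have hset : (dyckFinset k).filter (fun A => valleyHeights A = []) = {pyr k} := by
    ext A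
    rw [Finset.mem_filter, Finset.mem_singleton, mem_dyckFinset]
    constructor
    · rintro ⟨⟨hd, hl⟩, hv⟩
      rw [valleyHeights_eq_myVH] at hv
      obtain ⟨i, j, rfl⟩ := no_valley_shape _ 0 hv
      have hbal := isDyck_bal hd
      simp only [bal_append, bal_replicate_true, bal_replicate_false] at hbal
      have hij : i = j := by omega
      subst hij
      have hik : i = k := by
        simp only [List.length_append, List.length_replicate] at hl
        omega
      subst hik
      rfl
    · rintro rfl
      refine ⟨⟨isDyck_pyr k, ?_⟩, valleyHeights_pyr k⟩
      simp only [pyr, List.length_append, List.length_replicate]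
      ring
  rw [hset, Finset.card_singleton]
/-! ### uudu avoidance -/

abbrev pat : List Bool := [true, true, false, true]

lemma isDyck_getLast {w : List Bool} (h : IsDyckWord w) (hne : w ≠ []) :
    w.getLast hne = false := by
  by_contra hlast
  have hlast' : w.getLast hne = true := by
    cases hw : w.getLast hne
    · exact absurd hw hlast
    · rfl
  have hsplit : w.dropLast ++ [w.getLast hne] = w := List.dropLast_append_getLast hne
  have hpre : 0 ≤ bal w.dropLast := isDyck_prefix h ⟨[w.getLast hne], hsplit⟩
  have hb2 : bal (w.dropLast ++ [w.getLast hne]) = 0 := by rw [hsplit]; exact isDyck_bal h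
  rw [bal_append, hlast'] at hb2
  have hone : bal [true] = 1 := by simp [bal]
  omega

lemma isDyck_getLast? {w : List Bool} (h : IsDyckWord w) (hne : w ≠ []) :
    w.getLast? = some false := by
  rw [List.getLast?_eq_getLast hne]
  exact congrArg some (isDyck_getLast h hne)

lemma infix_iff_exists_drop {α : Type*} (l w : List α) :
    l <:+: w ↔ ∃ p, l <+: w.drop p := by
  constructor
  · rintro ⟨s, t, rfl⟩
    exact ⟨s.length, ⟨t, by rw [List.append_assoc, List.drop_left]⟩⟩
  · rintro ⟨p, hp⟩
    exact hp.isInfix.trans (List.drop_suffix p w).isInfix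

lemma pat_prefix_case {A B D : List Bool} (hA : IsDyckWord A) (hD : D <:+ A)
    (h : pat <+: D ++ false :: B) : pat <:+: A := by
  match D with
  | [] => simp [List.cons_prefix_cons] at h
  | [d0] => simp [List.cons_prefix_cons] at h
  | [d0, d1] =>
    simp [List.cons_prefix_cons] at h
    exfalso
    obtain ⟨rfl, rfl, -⟩ := h
    obtain ⟨s, hs⟩ := hD
    have hne : A ≠ [] := by
      intro hAe; rw [hAe] at hs; simp at hs
    have hlast := isDyck_getLast? hA hne
    rw [← hs, show s ++ [true, true] = (s ++ [true]) ++ [true] by simp,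
      List.getLast?_concat] at hlast
    exact Bool.noConfusion (Option.some_inj.mp hlast)
  | d0 :: d1 :: d2 :: D2 =>
    rw [show (d0 :: d1 :: d2 :: D2) ++ false :: B = d0 :: d1 :: d2 :: (D2 ++ false :: B)
      from rfl] at h
    simp only [List.cons_prefix_cons] at h
    obtain ⟨rfl, rfl, rfl, h4⟩ := h
    match D2 with
    | [] => simp [List.cons_prefix_cons] at h4
    | e :: E =>
      rw [List.cons_append, List.cons_prefix_cons] at h4
      obtain ⟨rfl, -⟩ := h4
      have hpre : pat <+: true :: true :: false :: true :: E := by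
        simp [List.cons_prefix_cons]
      exact hpre.isInfix.trans hD.isInfix

lemma tft_prefix_case {A B : List Bool} (hA : IsDyckWord A)
    (h : [true, false, true] <+: A ++ false :: B) : A.take 3 = [true, false, true] := by
  match A with
  | [] => simp [List.cons_prefix_cons] at h
  | [a0] =>
    simp [List.cons_prefix_cons] at h
    exfalso
    obtain ⟨rfl, -⟩ := h
    have := isDyck_bal hA
    simp [bal] at this
  | a0 :: a1 :: A1 =>
    rw [show (a0 :: a1 :: A1) ++ false :: B = a0 :: a1 :: (A1 ++ false :: B) from rfl] at h
    simp only [List.cons_prefix_cons] at h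
    obtain ⟨rfl, rfl, h3⟩ := h
    match A1 with
    | [] => simp [List.cons_prefix_cons] at h3
    | c :: C =>
      rw [List.cons_append, List.cons_prefix_cons] at h3
      obtain ⟨rfl, -⟩ := h3
      rfl

lemma take3_of_take3 {A : List Bool} (h : A.take 3 = [true, false, true]) {x : List Bool} :
    (A ++ x).take 3 = [true, false, true] := by
  have hlen : 3 ≤ A.length := by
    have := congrArg List.length h
    simp at this
    omega
  rw [List.take_append, Nat.sub_eq_zero_of_le hlen]
  simp [h]

lemma pat_infix_dw {A B : List Bool} (hA : IsDyckWord A) (hB : IsDyckWord B) :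
    pat <:+: dw A B ↔ pat <:+: A ∨ pat <:+: B ∨ A.take 3 = [true, false, true] := by
  constructor
  · intro h
    obtain ⟨p, hp⟩ := (infix_iff_exists_drop _ _).mp h
    match p with
    | 0 =>
      rw [List.drop_zero] at hp
      unfold dw at hp
      rw [List.cons_prefix_cons] at hp
      exact Or.inr (Or.inr (tft_prefix_case hA hp.2))
    | q + 1 =>
      rw [show dw A B = true :: (A ++ false :: B) from rfl, List.drop_succ_cons] at hp
      by_cases hq : q ≤ A.length
      · rw [List.drop_append, Nat.sub_eq_zero_of_le hq, List.drop_zero] at hp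
        exact Or.inl (pat_prefix_case hA (List.drop_suffix q A) hp)
      · rw [List.drop_append, List.drop_eq_nil_of_le (by omega),
          List.nil_append] at hp
        rcases hr : q - A.length with _ | r
        · omega
        · rw [hr, List.drop_succ_cons] at hp
          exact Or.inr (Or.inl ((infix_iff_exists_drop _ _).mpr ⟨r, hp⟩))
  · intro h
    rcases h with h | h | h
    · refine h.trans ⟨[true], false :: B, rfl⟩
    · refine h.trans ⟨true :: (A ++ [false]), [], by simp [dw]⟩
    · apply List.IsPrefix.isInfix
      rw [show dw A B = true :: (A ++ false :: B) from rfl]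
      rw [show pat = true :: [true, false, true] from rfl, List.cons_prefix_cons]
      refine ⟨rfl, ?_⟩
      have := take3_of_take3 h (x := false :: B)
      exact ⟨(A ++ false :: B).drop 3, by rw [← this]; exact List.take_append_drop _ _⟩

lemma avoids_dw {A B : List Bool} (hA : IsDyckWord A) (hB : IsDyckWord B) :
    (¬ pat <:+: dw A B) ↔
      ((¬ pat <:+: A) ∧ A.take 3 ≠ [true, false, true]) ∧ (¬ pat <:+: B) := by
  rw [pat_infix_dw hA hB]
  tauto

lemma take3_dw {A B : List Bool} (hA : IsDyckWord A) (hB : IsDyckWord B) :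
    (dw A B).take 3 = [true, false, true] ↔ A = [] ∧ B ≠ [] := by
  cases A with
  | nil =>
    cases B with
    | nil => simp [dw]
    | cons c B' =>
      have hc := isDyck_head hB
      subst hc
      simp [dw]
  | cons a A' =>
    have ha := isDyck_head hA
    subst ha
    simp [dw]

lemma startsUdu_dw {A B : List Bool} (hA : IsDyckWord A) (hB : IsDyckWord B) :
    ((¬ pat <:+: dw A B) ∧ (dw A B).take 3 = [true, false, true]) ↔
      (A = []) ∧ ((¬ pat <:+: B) ∧ B ≠ []) := by
  rw [avoids_dw hA hB, take3_dw hA hB]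
  constructor
  · rintro ⟨⟨-, havB⟩, rfl, hBne⟩
    exact ⟨rfl, havB, hBne⟩
  · rintro ⟨rfl, hav, hBne⟩
    exact ⟨⟨⟨by decide, by decide⟩, hav⟩, ⟨rfl, hBne⟩⟩
/-! ### Counting sequences -/

def aCnt (n : ℕ) : ℕ :=
  ((dyckFinset n).filter (fun w => ¬ [true, true, false, true] <:+: w)).card
def hCnt (n : ℕ) : ℕ :=
  ((dyckFinset n).filter
    (fun w => (¬ pat <:+: w) ∧ ¬ w.take 3 = [true, false, true])).card
def sCnt (n : ℕ) : ℕ :=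
  ((dyckFinset n).filter
    (fun w => (¬ pat <:+: w) ∧ w.take 3 = [true, false, true])).card
def bCnt (n : ℕ) : ℕ := ((dyckFinset n).filter (fun w => spPrime w = 0)).card
def gCnt (n : ℕ) : ℕ := ((dyckFinset n).filter GGood).card
def tCnt (n : ℕ) : ℕ := ((dyckFinset n).filter Fv0).card

lemma dyck0 : dyckFinset 0 = {[]} := by
  ext w
  rw [mem_dyckFinset, Finset.mem_singleton]
  constructor
  · rintro ⟨-, hl⟩
    rw [mul_zero] at hl
    exact List.length_eq_zero_iff.mp hl
  · rintro rfl
    exact ⟨by decide, rfl⟩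

lemma dyck_ne_nil {w : List Bool} {n : ℕ} (hw : w ∈ dyckFinset (n + 1)) : w ≠ [] := by
  rw [mem_dyckFinset] at hw
  intro h
  rw [h] at hw
  simp at hw

lemma aCnt0 : aCnt 0 = 1 := by rw [aCnt, dyck0]; decide
lemma bCnt0 : bCnt 0 = 1 := by rw [bCnt, dyck0]; decide
lemma gCnt0 : gCnt 0 = 1 := by
  rw [gCnt, dyck0]
  rw [Finset.filter_singleton]
  rw [if_pos (by constructor <;> simp)]
  rfl
lemma hCnt0 : hCnt 0 = 1 := by rw [hCnt, dyck0]; decide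
lemma sCnt0 : sCnt 0 = 0 := by rw [sCnt, dyck0]; decide
lemma tCnt0 : tCnt 0 = 0 := by
  rw [tCnt, dyck0, Finset.filter_singleton]
  rw [if_neg ?_]
  · rfl
  · rintro ⟨-, hh⟩
    simp at hh

/-- splitting a filtered count by a second predicate -/
lemma card_filter_split (s : Finset (List Bool)) (P Q : List Bool → Prop)
    [DecidablePred P] [DecidablePred Q] :
    (s.filter (fun w => P w ∧ Q w)).card + (s.filter (fun w => P w ∧ ¬ Q w)).card
      = (s.filter P).card := by
  classical
  rw [← Finset.filter_filter, ← Finset.filter_filter]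
  exact Finset.card_filter_add_card_filter_not (p := Q)

lemma a_split (n : ℕ) : aCnt n = hCnt n + sCnt n := by
  rw [aCnt, hCnt, sCnt]
  rw [← card_filter_split (dyckFinset n) (fun w => ¬ pat <:+: w)
    (fun w => w.take 3 = [true, false, true])]
  omega

lemma b_split (n : ℕ) : bCnt n = gCnt n + tCnt n := by
  rw [bCnt, gCnt, tCnt]
  rw [← card_filter_split (dyckFinset n) (fun w => spPrime w = 0)
    (fun w => (valleyHeights w).head? = some 0)]
  have h1 : (dyckFinset n).filter (fun w => spPrime w = 0 ∧ (valleyHeights w).head? = some 0)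
      = (dyckFinset n).filter Fv0 := rfl
  have h2 : (dyckFinset n).filter (fun w => spPrime w = 0 ∧ ¬ (valleyHeights w).head? = some 0)
      = (dyckFinset n).filter GGood := rfl
  rw [h1, h2]
  omega

lemma filter_nonempty_card (Q : List Bool → Prop) [DecidablePred Q] (m : ℕ) :
    ((dyckFinset m).filter (fun B => B ≠ [] ∧ Q B)).card
      = if m = 0 then 0 else ((dyckFinset m).filter Q).card := by
  cases m with
  | zero =>
    rw [if_pos rfl, dyck0, Finset.filter_singleton, if_neg (fun h => h.1 rfl)]
    rfl
  | succ m =>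
    rw [if_neg (Nat.succ_ne_zero m)]
    congr 1
    apply Finset.filter_congr
    intro w hw
    try simp only [eq_iff_iff]
    have := dyck_ne_nil hw
    tauto

lemma empty_count (k : ℕ) :
    ((dyckFinset k).filter (fun A => A = [])).card = if k = 0 then 1 else 0 := by
  cases k with
  | zero =>
    rw [if_pos rfl, dyck0, Finset.filter_singleton, if_pos rfl, Finset.card_singleton]
  | succ k =>
    rw [if_neg (Nat.succ_ne_zero k), Finset.card_eq_zero, Finset.filter_eq_empty_iff]
    intro w hw
    exact dyck_ne_nil hw

/-! ### The recurrences -/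

lemma a_rec (n : ℕ) : aCnt (n+1) = ∑ k ∈ Finset.range (n+1), hCnt k * aCnt (n-k) := by
  apply count_decomp
  intro A B hA hB
  exact avoids_dw hA hB

lemma b_rec (n : ℕ) : bCnt (n+1) = ∑ k ∈ Finset.range (n+1), bCnt k * gCnt (n-k) := by
  apply count_decomp
  intro A B hA hB
  exact spPrime_dw hA hB

lemma startsUdu_dw' {A B : List Bool} (hA : IsDyckWord A) (hB : IsDyckWord B) :
    ((¬ pat <:+: dw A B) ∧ (dw A B).take 3 = [true, false, true]) ↔
      (A = []) ∧ (B ≠ [] ∧ (¬ pat <:+: B)) := by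
  rw [startsUdu_dw hA hB]
  tauto

lemma s_rec (n : ℕ) : sCnt (n+1)
    = ∑ k ∈ Finset.range (n+1),
        (if k = 0 then 1 else 0) *
          (if n - k = 0 then 0 else aCnt (n-k)) := by
  rw [sCnt]
  rw [count_decomp (fun A => A = []) (fun B => B ≠ [] ∧ (¬ pat <:+: B)) _
    (fun A B hA hB => startsUdu_dw' hA hB) n]
  apply Finset.sum_congr rfl
  intro k _
  rw [empty_count, filter_nonempty_card]
  rfl

lemma t_rec (n : ℕ) : tCnt (n+1)
    = ∑ k ∈ Finset.range (n+1), (if n - k = 0 then 0 else gCnt (n-k)) := by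
  rw [tCnt]
  rw [count_decomp (fun A => valleyHeights A = []) (fun B => B ≠ [] ∧ GGood B) _
    (fun A B hA hB => fv0_dw hA hB) n]
  apply Finset.sum_congr rfl
  intro k _
  rw [pyr_count, filter_nonempty_card, one_mul]
  rfl

lemma s_eval (n : ℕ) : sCnt (n+1) = if n = 0 then 0 else aCnt n := by
  rw [s_rec]
  rw [Finset.sum_eq_single 0]
  · simp
  · intro k _ hk
    rw [if_neg hk, zero_mul]
  · intro h
    exfalso
    exact h (Finset.mem_range.mpr (Nat.succ_pos n))

lemma t_eval (n : ℕ) :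
    tCnt (n+1) = ∑ m ∈ Finset.range (n+1), (if m = 0 then 0 else gCnt m) := by
  rw [t_rec, ← Finset.sum_range_reflect]
  apply Finset.sum_congr rfl
  intro j hj
  rw [Finset.mem_range] at hj
  have : n - (n + 1 - 1 - j) = j := by omega
  rw [this]

lemma sum_ite_g (n : ℕ) :
    (∑ m ∈ Finset.range (n+1), (if m = 0 then 0 else gCnt m)) + 1
      = ∑ m ∈ Finset.range (n+1), gCnt m := by
  induction n with
  | zero => simp [gCnt0]
  | succ n ih =>
    rw [Finset.sum_range_succ, Finset.sum_range_succ (f := gCnt)]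
    rw [if_neg (Nat.succ_ne_zero n)]
    omega
/-! ### The main induction -/

lemma swap_sum (n : ℕ) :
    ∑ k ∈ Finset.range (n+1), gCnt k * bCnt (n-k)
      = ∑ k ∈ Finset.range (n+1), bCnt k * gCnt (n-k) := by
  rw [← Finset.sum_range_reflect]
  apply Finset.sum_congr rfl
  intro j hj
  rw [Finset.mem_range] at hj
  have h1 : n + 1 - 1 - j = n - j := by omega
  have h2 : n - (n - j) = j := by omega
  rw [h1, h2, mul_comm]

lemma main_seq : ∀ n, aCnt n = bCnt n ∧ hCnt n = gCnt n ∧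
    (∑ m ∈ Finset.range (n+1), gCnt m) = aCnt n + (if n = 0 then 0 else 1) := by
  intro n
  induction n using Nat.strong_induction_on with
  | _ n ih =>
    match n with
    | 0 =>
      refine ⟨by rw [aCnt0, bCnt0], by rw [hCnt0, gCnt0], ?_⟩
      rw [if_pos rfl, aCnt0]
      simp [gCnt0]
    | Nat.succ n =>
      have hab : aCnt (n+1) = bCnt (n+1) := by
        rw [a_rec, b_rec, ← swap_sum]
        apply Finset.sum_congr rfl
        intro k hk
        rw [Finset.mem_range] at hk
        have h1 := ih k (by omega)
        have h2 := ih (n - k) (by omega)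
        rw [h1.2.1, h2.1]
      have hts : tCnt (n+1) + 1 = aCnt n + (if n = 0 then 0 else 1) := by
        rw [t_eval, sum_ite_g, (ih n (by omega)).2.2]
      have hseval := s_eval n
      have hst : sCnt (n+1) = tCnt (n+1) := by
        by_cases hn : n = 0
        · rw [hseval, if_pos hn]
          rw [if_pos hn] at hts
          have ha0 : aCnt n = 1 := by rw [hn, aCnt0]
          omega
        · rw [hseval, if_neg hn]
          rw [if_neg hn] at hts
          omega
      have hhg : hCnt (n+1) = gCnt (n+1) := by
        have h1 := a_split (n+1)
        have h2 := b_split (n+1)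
        omega
      refine ⟨hab, hhg, ?_⟩
      rw [Finset.sum_range_succ]
      have hprev := (ih n (by omega)).2.2
      have h2 := b_split (n+1)
      rw [if_neg (Nat.succ_ne_zero n)]
      simp only [Nat.succ_eq_add_one] at *
      omega

lemma b_eq_a (n : ℕ) : bCnt n = aCnt n := (main_seq n).1.symm

lemma g_rel (n : ℕ) : gCnt (n+1) + (if n = 0 then 0 else bCnt n) = bCnt (n+1) := by
  have h1 := a_split (n+1)
  have h2 := (main_seq (n+1)).2.1
  have h3 := s_eval n
  have h4 := (main_seq n).1
  have h5 := (main_seq (n+1)).1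
  by_cases hn : n = 0
  · rw [if_pos hn]
    rw [if_pos hn] at h3
    omega
  · rw [if_neg hn]
    rw [if_neg hn] at h3
    omega
/-! ### Power series -/

open PowerSeries

noncomputable def Fq : PowerSeries ℚ := mk fun n => (bCnt n : ℚ)
noncomputable def Gq : PowerSeries ℚ := mk fun n => (gCnt n : ℚ)

lemma hFq : Fq = 1 + X * (Fq * Gq) := by
  ext n
  cases n with
  | zero =>
    simp only [Fq, coeff_mk, map_add, PowerSeries.coeff_zero_eq_constantCoeff,
      map_mul, map_one, constantCoeff_X, zero_mul, add_zero]
    rw [bCnt0]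
    norm_num
  | succ n =>
    rw [map_add, PowerSeries.coeff_succ_X_mul, PowerSeries.coeff_one, if_neg (Nat.succ_ne_zero n),
      zero_add, PowerSeries.coeff_mul, Finset.Nat.sum_antidiagonal_eq_sum_range_succ_mk]
    simp only [Fq, Gq, coeff_mk]
    rw [b_rec]
    push_cast
    rfl

lemma hGq : Gq = (1 - X) * Fq + X := by
  ext n
  rw [sub_mul, one_mul, map_add, map_sub]
  cases n with
  | zero =>
    simp only [Gq, Fq, coeff_mk, PowerSeries.coeff_zero_eq_constantCoeff, map_mul,
      constantCoeff_X, zero_mul, sub_zero, add_zero]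
    rw [gCnt0, bCnt0]
  | succ n =>
    rw [PowerSeries.coeff_succ_X_mul, PowerSeries.coeff_X]
    simp only [Gq, Fq, coeff_mk]
    have hrel := g_rel n
    by_cases hn : n = 0
    · subst hn
      rw [if_pos rfl]
      rw [if_pos rfl] at hrel
      have hb0 : bCnt 0 = 1 := bCnt0
      push_cast [← hrel, hb0]
      ring
    · rw [if_neg (by omega : ¬ n + 1 = 1)]
      rw [if_neg hn] at hrel
      push_cast [← hrel]
      ring
end GFAux
open PowerSeries in
/-- The generating function for Dyck paths with no pair of
consecutive valleys at the same height is
`(1 − z² − √((1−z)(1−3z−z²−z³))) / (2z(1−z))`, where the square root is the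
power series `R` with `R² = (1−z)(1−3z−z²−z³)` and constant term `1`; moreover
this equals the generating function for Dyck paths avoiding the consecutive
subpath `uudu`. -/
theorem no_equal_consecutive_valleys_gf :
    (∀ R : PowerSeries ℚ, R ^ 2 = (1 - X) * (1 - 3 * X - X ^ 2 - X ^ 3) →
      constantCoeff R = 1 →
      2 * X * (1 - X) *
          (mk fun n => (((dyckFinset n).filter (fun w => spPrime w = 0)).card : ℚ)) =
        1 - X ^ 2 - R) ∧
    (∀ n : ℕ,
      ((dyckFinset n).filter (fun w => spPrime w = 0)).card =
      ((dyckFinset n).filter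
        (fun w => ¬ [true, true, false, true] <:+: w)).card) := by
  constructor
  · intro R hR hR0
    have hFF : (mk fun n => (((dyckFinset n).filter (fun w => spPrime w = 0)).card : ℚ))
        = GFAux.Fq := rfl
    rw [hFF]
    have hQ : GFAux.Fq = 1 + (X : PowerSeries ℚ) * GFAux.Fq * ((1 - X) * GFAux.Fq + X) := by
      linear_combination GFAux.hFq + ((X : PowerSeries ℚ) * GFAux.Fq) * GFAux.hGq
    have hS2 : (1 - (X : PowerSeries ℚ)^2 - 2*X*(1-X)*GFAux.Fq)^2
        = (1-(X : PowerSeries ℚ))*(1-3*X-X^2-X^3) := by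
      linear_combination (-(4*(X : PowerSeries ℚ)*(1-X))) * hQ
    have hfac : (R - (1 - (X : PowerSeries ℚ)^2 - 2*X*(1-X)*GFAux.Fq))
        * (R + (1 - (X : PowerSeries ℚ)^2 - 2*X*(1-X)*GFAux.Fq)) = 0 := by
      linear_combination hR - hS2
    rcases mul_eq_zero.mp hfac with h | h
    · linear_combination h
    · exfalso
      have h0 := congrArg (constantCoeff) h
      rw [map_add, hR0] at h0
      simp only [map_sub, map_mul, map_one, map_pow, constantCoeff_X, map_ofNat,
        map_zero] at h0
      norm_num at h0
  · intro n
    exact (GFAux.main_seq n).1.symm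
end

section
/- The number of Dyck paths of semilength n whose sequence of valley heights (read left to right) is strictly increasing equals 2^{n−1} for n ≥ 1; equivalently, the generating function of such paths is (1−z)/(1−2z). -/
def htot (w : List Bool) : ℤ := (w.count true : ℤ) - (w.count false : ℤ)

lemma hgt_zero (w : List Bool) : hgt w 0 = 0 := by simp [hgt]

lemma hgt_length (w : List Bool) : hgt w w.length = htot w := by
  simp [hgt, htot]

lemma hgt_of_le {w : List Bool} {j : ℕ} (h : w.length ≤ j) : hgt w j = htot w := by
  simp [hgt, htot, List.take_of_length_le h]

lemma hgt_append_of_le {x y : List Bool} {j : ℕ} (h : j ≤ x.length) :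
    hgt (x ++ y) j = hgt x j := by
  unfold hgt; rw [List.take_append_of_le_length h]

lemma hgt_append_add (x y : List Bool) (j : ℕ) :
    hgt (x ++ y) (x.length + j) = htot x + hgt y j := by
  unfold hgt htot
  rw [List.take_append, List.count_append, List.count_append]
  rw [List.take_of_length_le (Nat.le_add_right x.length j), Nat.add_sub_cancel_left]
  push_cast; ring

lemma hgt_succ {w : List Bool} {j : ℕ} (h : j < w.length) :
    hgt w (j+1) = hgt w j + if w.getD j true = true then 1 else -1 := by
  have h1 : w.take (j+1) = w.take j ++ [w.getD j true] := by
    rw [List.take_succ, List.getElem?_eq_getElem h, List.getD_eq_getElem _ _ h]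
    rfl
  unfold hgt
  rw [h1, List.count_append, List.count_append]
  cases hb : w.getD j true <;> simp [hb] <;> push_cast <;> ring

lemma htot_dyck {w : List Bool} (hw : IsDyckWord w) : htot w = 0 := by
  simp [htot, hw.1]

lemma dyck_count_of_htot {w : List Bool} (h : htot w = 0)
    (h2 : ∀ j, 0 ≤ hgt w j) : IsDyckWord w := by
  refine ⟨?_, h2⟩
  have := sub_eq_zero.mp h
  exact_mod_cast this

lemma mem_boolLists {w : List Bool} {m : ℕ} : w ∈ boolLists m ↔ w.length = m := by
  constructor
  · rintro hw
    simp only [boolLists, Finset.mem_image] at hw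
    obtain ⟨f, _, rfl⟩ := hw
    simp
  · rintro rfl
    simp only [boolLists, Finset.mem_image]
    exact ⟨w.get, Finset.mem_univ _, List.ofFn_get w⟩

lemma getD_out {l : List Bool} {i : ℕ} (h : l.length ≤ i) (d : Bool) : l.getD i d = d :=
  List.getD_eq_default _ _ h

lemma getD_replicate' (a : ℕ) (b : Bool) (k : ℕ) (d : Bool) :
    (List.replicate a b).getD k d = if k < a then b else d := by
  by_cases h : k < a
  · rw [List.getD_eq_getElem _ _ (by simpa using h)]
    simp [h]
  · rw [getD_out (by simpa using Nat.le_of_not_lt h)]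
    simp [h]

lemma isValleyB_iff {w : List Bool} {i : ℕ} :
    isValleyB w i = true ↔ w.getD i true = false ∧ w.getD (i+1) false = true := by
  simp [isValleyB]

lemma valleyList_ud (a : ℕ) :
    valleyList (List.replicate a true ++ List.replicate a false) = [] := by
  apply List.filter_eq_nil_iff.mpr
  intro i _
  simp only [Bool.not_eq_true]
  rw [← Bool.not_eq_true, isValleyB_iff]
  rintro ⟨h1, h2⟩
  have ha : a ≤ i := by
    by_contra h
    push_neg at h
    rw [List.getD_append _ _ _ _ (by simpa using h), getD_replicate' ] at h1
    simp [h] at h1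
  have hb : i + 1 < a := by
    by_contra h
    push_neg at h
    rw [List.getD_append_right _ _ _ _ (by simpa using h), getD_replicate'] at h2
    split at h2 <;> simp_all
  omega

lemma vh_nonneg {w : List Bool} (hw : IsDyckWord w) :
    ∀ h ∈ valleyHeights w, 0 ≤ h := by
  intro h hh
  simp only [valleyHeights, List.mem_map] at hh
  obtain ⟨i, _, rfl⟩ := hh
  exact hw.2 _

lemma no_valley_structure_aux :
    ∀ (w : List Bool), (∀ i, ¬(w.getD i true = false ∧ w.getD (i+1) false = true)) →
      w = List.replicate (w.count true) true ++ List.replicate (w.count false) false := by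
  intro w
  induction w with
  | nil => simp
  | cons b t ih =>
    intro H
    have Ht : ∀ i, ¬(t.getD i true = false ∧ t.getD (i+1) false = true) := by
      intro i hi
      exact H (i+1) (by simpa using hi)
    have ht := ih Ht
    cases b with
    | true =>
      rw [show (true :: t).count true = t.count true + 1 by simp [List.count_cons],
        show (true :: t).count false = t.count false by simp [List.count_cons]]
      simp only [List.replicate_succ, List.cons_append]
      rw [← ht]
    | false =>
      have hct : t.count true = 0 := by
        by_contra h
        have hpos : 0 < t.count true := Nat.pos_of_ne_zero h
        have h0 : t.getD 0 false = true := by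
          rw [ht, List.getD_append _ _ _ _ (by simpa using hpos), getD_replicate']
          simp [hpos]
        exact H 0 ⟨rfl, by simpa using h0⟩
      rw [hct] at ht
      simp only [List.replicate_zero, List.nil_append] at ht
      rw [show (false :: t).count true = 0 by simp [List.count_cons, hct],
        show (false :: t).count false = t.count false + 1 by simp [List.count_cons]]
      simp only [List.replicate_zero, List.nil_append, List.replicate_succ]
      conv_lhs => rw [ht]

section Decomp
variable (x y : List Bool)

lemma decomp_len : (x ++ [true] ++ y ++ [false]).length = x.length + 1 + (y.length + 1) := by
  simp; omega

lemma decomp_getD_left {i : ℕ} (h : i < x.length) (d : Bool) :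
    (x ++ [true] ++ y ++ [false]).getD i d = x.getD i d := by
  rw [List.append_assoc, List.append_assoc, List.getD_append _ _ _ _ h]

lemma decomp_getD_mid (d : Bool) :
    (x ++ [true] ++ y ++ [false]).getD x.length d = true := by
  rw [List.append_assoc, List.append_assoc, List.getD_append_right _ _ _ _ le_rfl]
  simp

lemma decomp_getD_right {j : ℕ} (h : j < y.length) (d : Bool) :
    (x ++ [true] ++ y ++ [false]).getD (x.length + 1 + j) d = y.getD j d := by
  rw [List.append_assoc, List.append_assoc,
    List.getD_append_right _ _ _ _ (by omega : x.length ≤ x.length + 1 + j)]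
  have : x.length + 1 + j - x.length = j + 1 := by omega
  rw [this, List.singleton_append, List.getD_cons_succ, List.getD_append _ _ _ _ h]

lemma decomp_getD_last (d : Bool) :
    (x ++ [true] ++ y ++ [false]).getD (x.length + 1 + y.length) d = false := by
  rw [List.append_assoc, List.append_assoc,
    List.getD_append_right _ _ _ _ (by omega : x.length ≤ x.length + 1 + y.length)]
  have : x.length + 1 + y.length - x.length = y.length + 1 := by omega
  rw [this, List.singleton_append, List.getD_cons_succ, List.getD_append_right _ _ _ _ le_rfl]
  simp

lemma valleyList_decomp (hx : x ≠ [] → x.getD (x.length - 1) true = false) :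
    valleyList (x ++ [true] ++ y ++ [false]) =
      valleyList x ++ (if x.length = 0 then [] else [x.length - 1])
        ++ (valleyList y).map (fun j => x.length + 1 + j) := by
  have hlen : (x ++ [true] ++ y ++ [false]).length = (x.length + 1) + (y.length + 1) := by
    rw [decomp_len]
  have hmid : isValleyB (x ++ [true] ++ y ++ [false]) x.length = false := by
    unfold isValleyB
    rw [decomp_getD_mid]
    simp
  have hlast : isValleyB (x ++ [true] ++ y ++ [false]) (x.length + 1 + y.length) = false := by
    unfold isValleyB
    rw [show x.length + 1 + y.length + 1 = x.length + 1 + (y.length + 1) by omega,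
      List.getD_eq_default _ _ hlen.le]
    simp
  have hright : List.filter (isValleyB (x ++ [true] ++ y ++ [false]) ∘ fun i => x.length + 1 + i)
      (List.range y.length) = List.filter (isValleyB y) (List.range y.length) := by
    apply List.filter_congr
    intro j hj
    rw [List.mem_range] at hj
    simp only [Function.comp]
    unfold isValleyB
    rw [decomp_getD_right x y hj]
    rcases Nat.lt_or_ge (j+1) y.length with h | h
    · rw [show x.length + 1 + j + 1 = x.length + 1 + (j+1) by omega, decomp_getD_right x y h]
    · have hM : j + 1 = y.length := by omega
      rw [show x.length + 1 + j + 1 = x.length + 1 + y.length by omega, decomp_getD_last]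
      rw [List.getD_eq_default _ _ (by omega : y.length ≤ j + 1)]
  have hleft : List.filter (isValleyB (x ++ [true] ++ y ++ [false])) (List.range x.length)
      = valleyList x ++ (if x.length = 0 then [] else [x.length - 1]) := by
    rcases Nat.eq_zero_or_pos x.length with h0 | hpos
    · have hx0 : x = [] := List.length_eq_zero_iff.mp h0
      simp [h0, valleyList, hx0]
    · have hL : x.length = (x.length - 1) + 1 := by omega
      conv_lhs => rw [hL]
      rw [List.range_succ, List.filter_append]
      have e1 : List.filter (isValleyB (x ++ [true] ++ y ++ [false])) (List.range (x.length - 1))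
          = List.filter (isValleyB x) (List.range (x.length - 1)) := by
        apply List.filter_congr
        intro i hi
        rw [List.mem_range] at hi
        unfold isValleyB
        rw [decomp_getD_left x y (by omega), decomp_getD_left x y (by omega)]
      have e2 : isValleyB (x ++ [true] ++ y ++ [false]) (x.length - 1) = true := by
        rw [isValleyB_iff]
        constructor
        · rw [decomp_getD_left x y (by omega)]
          exact hx (fun h => by rw [h] at hpos; simp at hpos)
        · rw [show x.length - 1 + 1 = x.length by omega, decomp_getD_mid]
      have e3 : valleyList x = List.filter (isValleyB x) (List.range (x.length - 1)) := by
        unfold valleyList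
        conv_lhs => rw [hL]
        rw [List.range_succ, List.filter_append]
        have : isValleyB x (x.length - 1) = false := by
          unfold isValleyB
          rw [show x.length - 1 + 1 = x.length by omega, List.getD_eq_default _ _ le_rfl]
          simp
        simp [this]
      rw [e1, e3, List.filter_singleton]
      have e2' := e2
      simp only [List.append_assoc, List.singleton_append, List.cons_append, List.nil_append] at e2'
      simp [e2', hpos.ne']
  conv_lhs => rw [valleyList]
  rw [hlen, List.range_add, List.range_succ, List.range_succ]
  rw [List.filter_append, List.filter_append, List.filter_map, List.filter_append]
  rw [hleft, hright, List.filter_singleton, List.filter_singleton]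
  simp only [Function.comp, hmid, hlast, cond_false]
  simp [valleyList, List.append_assoc]
end Decomp

lemma htot_append (x y : List Bool) : htot (x ++ y) = htot x + htot y := by
  unfold htot
  rw [List.count_append, List.count_append]
  push_cast; ring

lemma mem_valleyList_lt {x : List Bool} {i : ℕ} (h : i ∈ valleyList x) : i < x.length := by
  simp only [valleyList, List.mem_filter, List.mem_range] at h
  exact h.1

lemma valleyHeights_decomp (x y : List Bool) (hx : x ≠ [] → x.getD (x.length - 1) true = false) :
    valleyHeights (x ++ [true] ++ y ++ [false]) =
      valleyHeights x ++ (if x.length = 0 then [] else [htot x])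
        ++ (valleyHeights y).map (fun h => h + (htot x + 1)) := by
  have hA : (valleyList x).map (fun i => hgt (x ++ [true] ++ y ++ [false]) (i+1))
      = (valleyList x).map (fun i => hgt x (i+1)) := by
    apply List.map_congr_left
    intro i hi
    have hi' : i + 1 ≤ x.length := mem_valleyList_lt hi
    rw [hgt_append_of_le (by simp; try omega), hgt_append_of_le (by simp; try omega),
      hgt_append_of_le hi']
  have hB : (if x.length = 0 then ([]:List ℕ) else [x.length - 1]).map
        (fun i => hgt (x ++ [true] ++ y ++ [false]) (i+1))
      = (if x.length = 0 then [] else [htot x]) := by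
    rcases Nat.eq_zero_or_pos x.length with h0 | hpos
    · simp [h0]
    · rw [if_neg hpos.ne', if_neg hpos.ne']
      simp only [List.map_cons, List.map_nil]
      rw [show x.length - 1 + 1 = x.length by omega]
      rw [hgt_append_of_le (by simp; try omega), hgt_append_of_le (by simp; try omega),
        hgt_append_of_le le_rfl, hgt_length]
  have hC : ((valleyList y).map (fun j => x.length + 1 + j)).map
        (fun i => hgt (x ++ [true] ++ y ++ [false]) (i+1))
      = ((valleyList y).map (fun i => hgt y (i+1))).map (fun h => h + (htot x + 1)) := by
    rw [List.map_map, List.map_map]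
    apply List.map_congr_left
    intro j hj
    have hj' : j + 1 ≤ y.length := mem_valleyList_lt hj
    simp only [Function.comp]
    rw [show x ++ [true] ++ y ++ [false] = (x ++ [true]) ++ (y ++ [false]) by
      simp [List.append_assoc]]
    rw [show x.length + 1 + j + 1 = (x ++ [true]).length + (j + 1) by simp; try omega]
    rw [hgt_append_add, hgt_append_of_le hj', htot_append]
    simp [htot]
    ring
  unfold valleyHeights
  rw [valleyList_decomp x y hx, List.map_append, List.map_append, hA, hB, hC]

def phi (a : ℕ) (y : List Bool) : List Bool :=
  List.replicate a true ++ List.replicate a false ++ [true] ++ y ++ [false]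

lemma phi_len (a : ℕ) (y : List Bool) : (phi a y).length = 2*a + 2 + y.length := by
  simp [phi]; omega

lemma ud_last (a : ℕ) (ha : 0 < a) :
    (List.replicate a true ++ List.replicate a false).getD
      ((List.replicate a true ++ List.replicate a false).length - 1) true = false := by
  have hlen : (List.replicate a true ++ List.replicate a false).length = 2*a := by simp; try omega
  rw [hlen, List.getD_append_right _ _ _ _ (by simp; try omega), getD_replicate']
  simp only [List.length_replicate]
  rw [if_pos (by omega)]

lemma htot_ud (a : ℕ) : htot (List.replicate a true ++ List.replicate a false) = 0 := by
  simp [htot, htot_append, List.count_replicate]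

lemma vh_phi (a : ℕ) (y : List Bool) :
    valleyHeights (phi a y) = (if a = 0 then [] else [(0:ℤ)])
      ++ (valleyHeights y).map (fun h => h + 1) := by
  unfold phi
  rw [valleyHeights_decomp _ _
    (fun h => ud_last a (Nat.pos_of_ne_zero (fun h0 => h (by simp [h0]))))]
  rw [htot_ud]
  have hnil : valleyHeights (List.replicate a true ++ List.replicate a false) = [] := by
    unfold valleyHeights
    rw [valleyList_ud]
    rfl
  rw [hnil]
  have hlen : (List.replicate a true ++ List.replicate a false).length = 2*a := by simp; try omega
  rw [hlen]
  rcases Nat.eq_zero_or_pos a with h0 | hpos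
  · simp [h0]
  · rw [if_neg (by omega), if_neg (by omega)]
    simp

lemma pairwise_phi {y : List Bool} (hy : IsDyckWord y) (a : ℕ) :
    (valleyHeights (phi a y)).Pairwise (· < ·) ↔ (valleyHeights y).Pairwise (· < ·) := by
  rw [vh_phi]
  rw [List.pairwise_append]
  have hmap : (List.map (fun h => h + 1) (valleyHeights y)).Pairwise (· < ·)
      ↔ (valleyHeights y).Pairwise (· < ·) := by
    rw [List.pairwise_map]
    constructor <;> exact fun h => h.imp (by intro a b; omega)
  constructor
  · rintro ⟨_, h2, _⟩
    exact hmap.mp h2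
  · intro h
    refine ⟨?_, hmap.mpr h, ?_⟩
    · split <;> simp
    · intro p hp q hq
      split at hp
      · simp at hp
      · simp at hp
        subst hp
        simp only [List.mem_map] at hq
        obtain ⟨b, hb, rfl⟩ := hq
        have := vh_nonneg hy b hb
        omega

lemma dyck_append {x y : List Bool} (hx : IsDyckWord x) (hy : IsDyckWord y) :
    IsDyckWord (x ++ y) := by
  apply dyck_count_of_htot
  · rw [htot_append, htot_dyck hx, htot_dyck hy]; ring
  · intro j
    rcases le_or_gt j x.length with h | h
    · rw [hgt_append_of_le h]; exact hx.2 j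
    · rw [show j = x.length + (j - x.length) by omega, hgt_append_add, htot_dyck hx]
      simpa using hy.2 _

lemma dyck_nest {y : List Bool} (hy : IsDyckWord y) : IsDyckWord ([true] ++ y ++ [false]) := by
  apply dyck_count_of_htot
  · rw [List.append_assoc, htot_append, htot_append, htot_dyck hy]; simp [htot]
  · intro j
    cases j with
    | zero => rw [hgt_zero]
    | succ k =>
      rw [show [true] ++ y ++ [false] = [true] ++ (y ++ [false]) by simp,
        show k + 1 = ([true] : List Bool).length + k by simp [Nat.add_comm],
        hgt_append_add]
      have h1 : htot [true] = 1 := by simp [htot]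
      rw [h1]
      have h2 : -1 ≤ hgt (y ++ [false]) k := by
        rcases le_or_gt k y.length with h | h
        · rw [hgt_append_of_le h]; have := hy.2 k; linarith
        · rw [hgt_of_le (by simp; omega), htot_append, htot_dyck hy]
          simp [htot]
      linarith

lemma dyck_ud (a : ℕ) : IsDyckWord (List.replicate a true ++ List.replicate a false) := by
  induction a with
  | zero => exact ⟨by simp, fun j => by simp [hgt]⟩
  | succ a ih =>
    have : List.replicate (a+1) true ++ List.replicate (a+1) false
        = [true] ++ (List.replicate a true ++ List.replicate a false) ++ [false] := by
      rw [List.replicate_succ, List.replicate_succ']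
      simp [List.append_assoc]
    rw [this]
    exact dyck_nest ih

lemma dyck_phi {y : List Bool} (hy : IsDyckWord y) (a : ℕ) : IsDyckWord (phi a y) := by
  have : phi a y = (List.replicate a true ++ List.replicate a false)
      ++ ([true] ++ y ++ [false]) := by
    simp [phi, List.append_assoc]
  rw [this]
  exact dyck_append (dyck_ud a) (dyck_nest hy)

lemma hgt_phi_mid (a : ℕ) (y : List Bool) : hgt (phi a y) (2*a) = 0 := by
  have : phi a y = (List.replicate a true ++ List.replicate a false)
      ++ ([true] ++ y ++ [false]) := by simp [phi, List.append_assoc]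
  rw [this, hgt_append_of_le (by simp; omega)]
  rw [show 2*a = (List.replicate a true ++ List.replicate a false).length by simp; omega,
    hgt_length, htot_ud]

lemma hgt_phi_pos {y : List Bool} (hy : IsDyckWord y) (a : ℕ) {k : ℕ}
    (hk : 2*a < k) (hk2 : k < (phi a y).length) : 0 < hgt (phi a y) k := by
  rw [phi_len] at hk2
  have : phi a y = (List.replicate a true ++ List.replicate a false)
      ++ ([true] ++ (y ++ [false])) := by simp [phi, List.append_assoc]
  rw [this]
  rw [show k = (List.replicate a true ++ List.replicate a false).length + (1 + (k - 2*a - 1))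
      by simp; omega]
  rw [hgt_append_add, htot_ud,
    show (1 : ℕ) + (k - 2*a - 1) = ([true] : List Bool).length + (k - 2*a - 1) by simp,
    hgt_append_add]
  have h1 : htot [true] = 1 := by simp [htot]
  have h2 : 0 ≤ hgt (y ++ [false]) (k - 2*a - 1) := by
    rw [hgt_append_of_le (by omega)]
    exact hy.2 _
  rw [h1]
  linarith

lemma phi_inj {a a' : ℕ} {y y' : List Bool} (hy : IsDyckWord y) (hy' : IsDyckWord y')
    (h : phi a y = phi a' y') : a = a' ∧ y = y' := by
  have hlen : 2*a + 2 + y.length = 2*a' + 2 + y'.length := by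
    rw [← phi_len a y, ← phi_len a' y', h]
  have haa : a = a' := by
    rcases lt_trichotomy a a' with hlt | heq | hgt'
    · exfalso
      have h1 : hgt (phi a' y') (2*a') = 0 := hgt_phi_mid a' y'
      have h2 : 0 < hgt (phi a y) (2*a') := by
        apply hgt_phi_pos hy a (by omega)
        rw [phi_len]; omega
      rw [h] at h2
      linarith
    · exact heq
    · exfalso
      have h1 : hgt (phi a y) (2*a) = 0 := hgt_phi_mid a y
      have h2 : 0 < hgt (phi a' y') (2*a) := by
        apply hgt_phi_pos hy' a' (by omega)
        rw [phi_len]; omega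
      rw [← h] at h2
      linarith
  subst haa
  refine ⟨rfl, ?_⟩
  unfold phi at h
  have h1 := List.append_cancel_right h
  exact List.append_cancel_left h1

lemma dyck_last {x : List Bool} (hx : IsDyckWord x) (hne : x ≠ []) :
    x.getD (x.length - 1) true = false ∧ hgt x (x.length - 1) = 1 := by
  have hlp : 0 < x.length := List.length_pos_iff.mpr hne
  have hstep := hgt_succ (show x.length - 1 < x.length by omega)
  rw [show x.length - 1 + 1 = x.length by omega, hgt_length, htot_dyck hx] at hstep
  have h0 : 0 ≤ hgt x (x.length - 1) := hx.2 _
  cases hb : x.getD (x.length - 1) true with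
  | true => rw [hb] at hstep; simp at hstep; linarith
  | false => rw [hb] at hstep; simp at hstep; exact ⟨rfl, by linarith⟩

lemma no_valley_of_valleyList_nil {x : List Bool} (h : valleyList x = []) :
    ∀ i, ¬(x.getD i true = false ∧ x.getD (i+1) false = true) := by
  intro i hi
  rcases Nat.lt_or_ge i x.length with hlt | hge
  · have := List.filter_eq_nil_iff.mp h i (List.mem_range.mpr hlt)
    rw [isValleyB_iff] at this
    push_neg at this
    exact absurd hi.2 (this hi.1)
  · rw [List.getD_eq_default _ _ hge] at hi
    exact absurd hi.1 (by simp)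

theorem dyck_decomp {w : List Bool} (hw : IsDyckWord w) (hne : w ≠ [])
    (hv : (valleyHeights w).Pairwise (· < ·)) :
    ∃ a q, IsDyckWord q ∧ (valleyHeights q).Pairwise (· < ·) ∧ w = phi a q := by
  have hlen0 : 0 < w.length := List.length_pos_iff.mpr hne
  have hEnd : hgt w w.length = 0 := by rw [hgt_length, htot_dyck hw]
  classical
  set S : Finset ℕ := (Finset.range w.length).filter (fun j => hgt w j = 0) with hS
  have h0S : 0 ∈ S := by simp [hS, hlen0, hgt_zero]
  set J : ℕ := S.max' ⟨0, h0S⟩ with hJ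
  have hJmem : J ∈ S := S.max'_mem _
  have hJlt : J < w.length := by
    have := hJmem; simp [hS] at this; exact this.1
  have hJ0 : hgt w J = 0 := by
    have := hJmem; simp [hS] at this; exact this.2
  have hmax : ∀ j, J < j → j < w.length → 0 < hgt w j := by
    intro j h1 h2
    rcases lt_or_eq_of_le (hw.2 j) with h | h
    · exact h
    · exfalso
      have hjS : j ∈ S := by simp [hS, h2, h.symm]
      have := S.le_max' j hjS
      omega
  have hJ2 : J + 1 < w.length := by
    rcases Nat.lt_or_ge (J+1) w.length with h | h
    · exact h
    · exfalso
      have heq : J + 1 = w.length := by omega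
      have hstep := hgt_succ hJlt
      rw [hJ0, heq, hEnd] at hstep
      split at hstep <;> linarith
  have hcJ : w.getD J true = true := by
    have h1 : 0 < hgt w (J+1) := hmax _ (Nat.lt_succ_self J) hJ2
    have h2 := hgt_succ hJlt
    rw [hJ0] at h2
    cases hb : w.getD J true with
    | true => rfl
    | false => rw [hb] at h2; simp at h2; linarith
  obtain ⟨hcl, hl1⟩ := dyck_last hw hne
  -- split w
  set q : List Bool := (w.drop (J+1)).dropLast with hq
  have hdne : w.drop (J+1) ≠ [] := by
    apply List.ne_nil_of_length_pos
    rw [List.length_drop]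
    omega
  have hqlen : q.length = w.length - J - 2 := by
    rw [hq, List.length_dropLast, List.length_drop]
    omega
  have hgJ : w[J] = true := by
    rw [← List.getD_eq_getElem w true hJlt]; exact hcJ
  have hlastq : (w.drop (J+1)).getLast hdne = false := by
    rw [List.getLast_eq_getElem, List.getElem_drop]
    have harith : J + 1 + ((w.drop (J+1)).length - 1) = w.length - 1 := by
      rw [List.length_drop]; omega
    rw [← List.getD_eq_getElem w true (by rw [List.length_drop]; omega), harith]
    exact hcl
  have hdropJ : w.drop J = true :: (q ++ [false]) := by
    rw [List.drop_eq_getElem_cons hJlt, hgJ]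
    congr 1
    conv_lhs => rw [← List.dropLast_concat_getLast hdne, hlastq]
  have hsplit : w = w.take J ++ [true] ++ q ++ [false] := by
    conv_lhs => rw [← List.take_append_drop J w, hdropJ]
    simp
  -- P := w.take J is a Dyck word
  have hPlen : (w.take J).length = J := by rw [List.length_take]; omega
  have hPfact : ∀ j, j ≤ J → hgt (w.take J) j = hgt w j := by
    intro j hj
    unfold hgt
    rw [List.take_take, min_eq_left hj]
  have hPtot : htot (w.take J) = 0 := by
    rw [← hgt_length, hPlen, hPfact J le_rfl]; exact hJ0
  have hPdyck : IsDyckWord (w.take J) := by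
    apply dyck_count_of_htot hPtot
    intro j
    rcases le_or_gt j J with h | h
    · rw [hPfact j h]; exact hw.2 j
    · rw [hgt_of_le (by omega : (w.take J).length ≤ j), hPtot]
  -- q is a Dyck word
  have hq1 : ∀ k, k ≤ q.length → hgt w (J + 1 + k) = 1 + hgt q k := by
    intro k hk
    have e : (w.take J ++ [true]) ++ (q ++ [false]) = w := by
      have e0 : (w.take J ++ [true]) ++ (q ++ [false])
          = w.take J ++ [true] ++ q ++ [false] := by simp [List.append_assoc]
      rw [e0, ← hsplit]
    have e3 := hgt_append_add (w.take J ++ [true]) (q ++ [false]) k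
    rw [e] at e3
    rw [show (w.take J ++ [true]).length = J + 1 by simp [hPlen]] at e3
    rw [e3, htot_append, hPtot, hgt_append_of_le hk]
    have : htot [true] = 1 := by simp [htot]
    rw [this]; ring
  have hqtot : htot q = 0 := by
    have h1 := hq1 q.length le_rfl
    rw [hgt_length] at h1
    rw [show J + 1 + q.length = w.length - 1 by omega, hl1] at h1
    linarith
  have hqdyck : IsDyckWord q := by
    apply dyck_count_of_htot hqtot
    intro k
    rcases le_or_gt k q.length with h | h
    · have h2 := hq1 k h
      have h3 : 0 < hgt w (J+1+k) := hmax _ (by omega) (by omega)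
      linarith
    · rw [hgt_of_le (by omega), hqtot]
  -- valley heights decomposition
  have hvh : valleyHeights w = valleyHeights (w.take J)
      ++ (if (w.take J).length = 0 then [] else [(0:ℤ)])
      ++ (valleyHeights q).map (fun h => h + 1) := by
    conv_lhs => rw [hsplit]
    have := valleyHeights_decomp (w.take J) q (fun h => (dyck_last hPdyck h).1)
    rw [hPtot] at this
    simpa using this
  rw [hvh] at hv
  rcases Nat.eq_zero_or_pos J with hJz | hJpos
  · -- J = 0 : w = phi 0 q
    have htake0 : w.take J = [] := by rw [hJz]; simp
    rw [htake0] at hv hsplit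
    simp only [List.length_nil, if_pos rfl, List.nil_append] at hv
    have hvnil : valleyHeights ([] : List Bool) = [] := rfl
    rw [hvnil] at hv
    simp only [List.nil_append] at hv
    refine ⟨0, q, hqdyck, ?_, ?_⟩
    · have := List.pairwise_map.mp hv
      exact this.imp (by intro p r h; linarith)
    · rw [hsplit]; simp [phi]
  · -- J > 0 : P = u^a d^a
    have hPne : w.take J ≠ [] := List.ne_nil_of_length_pos (by omega)
    rw [if_neg (by omega)] at hv
    rw [List.pairwise_append] at hv
    obtain ⟨hv1, hv2, hv3⟩ := hv
    rw [List.pairwise_append] at hv1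
    obtain ⟨hv11, _, hv13⟩ := hv1
    have hVHP : valleyHeights (w.take J) = [] := by
      rw [List.eq_nil_iff_forall_not_mem]
      intro p hp
      have h1 := vh_nonneg hPdyck p hp
      have h2 := hv13 p hp 0 (by simp)
      linarith
    have hVLP : valleyList (w.take J) = [] := by
      have : valleyHeights (w.take J) = (valleyList (w.take J)).map _ := rfl
      rw [this] at hVHP
      exact List.map_eq_nil_iff.mp hVHP
    have hPeq := no_valley_structure_aux (w.take J) (no_valley_of_valleyList_nil hVLP)
    rw [← hPdyck.1] at hPeq
    have hwphi : w = phi ((w.take J).count true) q := by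
      conv_lhs => rw [hsplit]
      conv_lhs => rw [hPeq]
      rfl
    refine ⟨(w.take J).count true, q, hqdyck, ?_, hwphi⟩
    have := List.pairwise_map.mp hv2
    exact this.imp (by intro p r h; linarith)

def SIV (n : ℕ) : Finset (List Bool) :=
  (dyckFinset n).filter (fun w => (valleyHeights w).Pairwise (· < ·))

lemma mem_SIV {w : List Bool} {n : ℕ} :
    w ∈ SIV n ↔ w.length = 2*n ∧ IsDyckWord w ∧ (valleyHeights w).Pairwise (· < ·) := by
  simp [SIV, dyckFinset, Finset.mem_filter, mem_boolLists, and_assoc]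

lemma SIV_eq (n : ℕ) (hn : 1 ≤ n) :
    SIV n = (Finset.range n).biUnion (fun a => (SIV (n-1-a)).image (phi a)) := by
  ext w
  simp only [Finset.mem_biUnion, Finset.mem_range, Finset.mem_image]
  constructor
  · intro hw
    obtain ⟨hl, hd, hp⟩ := mem_SIV.mp hw
    have hne : w ≠ [] := by
      intro h; rw [h] at hl; simp at hl; omega
    obtain ⟨a, q, hqd, hqp, rfl⟩ := dyck_decomp hd hne hp
    rw [phi_len] at hl
    refine ⟨a, by omega, q, mem_SIV.mpr ⟨by omega, hqd, hqp⟩, rfl⟩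
  · rintro ⟨a, ha, q, hq, rfl⟩
    obtain ⟨hql, hqd, hqp⟩ := mem_SIV.mp hq
    exact mem_SIV.mpr ⟨by rw [phi_len]; omega, dyck_phi hqd a, (pairwise_phi hqd a).mpr hqp⟩

lemma SIV_card_rec (n : ℕ) (hn : 1 ≤ n) :
    (SIV n).card = ∑ a ∈ Finset.range n, (SIV (n-1-a)).card := by
  rw [SIV_eq n hn, Finset.card_biUnion]
  · apply Finset.sum_congr rfl
    intro a _
    apply Finset.card_image_of_injOn
    intro p hp r hr hpr
    exact (phi_inj (mem_SIV.mp hp).2.1 (mem_SIV.mp hr).2.1 hpr).2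
  · intro a _ b _ hab
    simp only [Function.onFun]; rw [Finset.disjoint_left]
    rintro w hwa hwb
    simp only [Finset.mem_image] at hwa hwb
    obtain ⟨p, hp, hpw⟩ := hwa
    obtain ⟨r, hr, hrw⟩ := hwb
    exact hab ((phi_inj (mem_SIV.mp hp).2.1 (mem_SIV.mp hr).2.1 (hpw.trans hrw.symm)).1)

lemma SIV_zero : SIV 0 = {[]} := by
  ext w
  rw [mem_SIV]
  simp only [Finset.mem_singleton]
  constructor
  · rintro ⟨hl, _, _⟩
    exact List.length_eq_zero_iff.mp (by omega)
  · rintro rfl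
    refine ⟨by simp, ⟨rfl, fun j => by simp [hgt]⟩, by simp [valleyHeights, valleyList]⟩

lemma SIV_card_zero : (SIV 0).card = 1 := by rw [SIV_zero]; rfl

lemma SIV_card_sum (n : ℕ) (hn : 1 ≤ n) :
    (SIV n).card = ∑ m ∈ Finset.range n, (SIV m).card := by
  rw [SIV_card_rec n hn]
  exact Finset.sum_range_reflect (fun m => (SIV m).card) n

lemma SIV_card_pow : ∀ n : ℕ, (SIV (n+1)).card = 2 ^ n := by
  intro n
  induction n with
  | zero =>
    rw [SIV_card_sum 1 le_rfl]
    simp [SIV_card_zero]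
  | succ k ih =>
    rw [SIV_card_sum (k+2) (by omega), Finset.sum_range_succ,
      ← SIV_card_sum (k+1) (by omega), ih]
    ring

lemma SIV_card (n : ℕ) (hn : 1 ≤ n) : (SIV n).card = 2 ^ (n-1) := by
  have : n = (n-1) + 1 := by omega
  rw [this, SIV_card_pow]
  norm_num

open PowerSeries in
/-- The number of Dyck paths of semilength `n ≥ 1` whose valley
heights strictly increase is `2^{n−1}`; equivalently, the generating function of
such paths is `(1−z)/(1−2z)`. -/
theorem strictly_increasing_valleys_count :
    (∀ n : ℕ, 1 ≤ n →
      ((dyckFinset n).filter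
        (fun w => (valleyHeights w).Pairwise (· < ·))).card = 2 ^ (n - 1)) ∧
    (mk fun n => (((dyckFinset n).filter
        (fun w => (valleyHeights w).Pairwise (· < ·))).card : ℚ)) * (1 - 2 * X) =
      1 - X := by
  constructor
  · intro n hn
    exact SIV_card n hn
  · set c : ℕ → ℚ := fun n => ((SIV n).card : ℚ) with hc
    have hmk : (mk fun n => (((dyckFinset n).filter
        (fun w => (valleyHeights w).Pairwise (· < ·))).card : ℚ)) = mk c := rfl
    rw [hmk]
    have hc0 : c 0 = 1 := by simp [hc, SIV_card_zero]
    have hcs : ∀ n : ℕ, c (n+1) = 2^n := by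
      intro n; simp [hc, SIV_card_pow]
    have h2 : (1 - 2 * X : PowerSeries ℚ) = 1 - X * C (2 : ℚ) := by
      rw [map_ofNat C 2]; ring
    rw [h2, mul_sub, mul_one, ← mul_assoc]
    ext n
    rw [map_sub, map_sub, PowerSeries.coeff_mul_C, PowerSeries.coeff_mk,
      PowerSeries.coeff_one, PowerSeries.coeff_X]
    cases n with
    | zero =>
      rw [PowerSeries.coeff_zero_mul_X, hc0]
      norm_num
    | succ k =>
      rw [PowerSeries.coeff_succ_mul_X, PowerSeries.coeff_mk]
      cases k with
      | zero => rw [hcs, hc0]; norm_num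
      | succ m => rw [hcs, hcs]; simp; ring
end

section
/- The generating function for Dyck paths whose sequence of peak heights is strictly increasing is Σ_{a≥0} z^a [a]_z!, where [a]_z! = [a]_z [a−1]_z ⋯ [1]_z and [i]_z = 1 + z + ⋯ + z^{i−1}; moreover the number of such paths of semilength n equals the number of compositions (c₁,…,c_m) of n with c_i ≤ i for all i. -/
open PowerSeries in
/-- the `q`-integer `[i]_z = 1 + z + ⋯ + z^{i−1}` as a power series. -/
noncomputable def qint (i : ℕ) : PowerSeries ℚ := ∑ k ∈ Finset.range i, (X : PowerSeries ℚ) ^ k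

/-- the `q`-factorial `[a]_z! = [a]_z [a−1]_z ⋯ [1]_z`. -/
noncomputable def qfact (a : ℕ) : PowerSeries ℚ := ∏ i ∈ Finset.range a, qint (i + 1)

namespace Aux

lemma hgt_append (u v : List Bool) (j : ℕ) :
    hgt (u ++ v) j = hgt u j + hgt v (j - u.length) := by
  unfold hgt
  rw [List.take_append, List.count_append, List.count_append]
  push_cast; ring

lemma hgt_of_le {w : List Bool} {j : ℕ} (h : w.length ≤ j) :
    hgt w j = (w.count true : ℤ) - w.count false := by
  unfold hgt; rw [List.take_of_length_le h]

lemma hgt_replicate_false (e j : ℕ) :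
    hgt (List.replicate e false) j = -(min j e : ℤ) := by
  unfold hgt
  rw [List.take_replicate]
  simp [List.count_replicate]

lemma hgt_replicate_true (e j : ℕ) :
    hgt (List.replicate e true) j = (min j e : ℤ) := by
  unfold hgt
  rw [List.take_replicate]
  simp [List.count_replicate]

lemma hgt_zero (w : List Bool) : hgt w 0 = 0 := by simp [hgt]

lemma hgt_succ {w : List Bool} {i : ℕ} (h : i < w.length) :
    hgt w (i+1) = hgt w i + (if w.getD i false then 1 else -1) := by
  have : w.take (i+1) = w.take i ++ [w[i]] := by
    rw [← List.take_concat_get' w i h]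
  unfold hgt
  rw [this, List.count_append, List.count_append]
  have hd : w[i]? = some (w[i]) := List.getElem?_eq_getElem h
  cases hw : w[i] <;> simp [List.getD, hw, hd] <;> push_cast <;> ring


lemma getD_rep {b d : Bool} {n i : ℕ} (h : i < n) : (List.replicate n b).getD i d = b := by
  rw [List.getD_eq_getElem _ _ (by simpa using h)]
  simp

lemma getD_rep_ge {b d : Bool} {n i : ℕ} (h : n ≤ i) : (List.replicate n b).getD i d = d := by
  rw [List.getD_eq_default]
  simpa using h

lemma isPeakB_shift (x w : List Bool) (i : ℕ) :
    isPeakB (x ++ w) (x.length + i) = isPeakB w i := by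
  unfold isPeakB
  rw [List.getD_append_right _ _ _ _ (Nat.le_add_right _ _),
      List.getD_append_right _ _ _ _ (by omega)]
  have e1 : x.length + i - x.length = i := by omega
  have e2 : x.length + i + 1 - x.length = i + 1 := by omega
  rw [e1, e2]

lemma peakList_append_d (e : ℕ) (w : List Bool) :
    peakList (List.replicate e false ++ w) = (peakList w).map (e + ·) := by
  unfold peakList
  rw [List.length_append, List.length_replicate, List.range_add, List.filter_append,
    List.filter_map]
  have h1 : (List.range e).filter (isPeakB (List.replicate e false ++ w)) = [] := by
    rw [List.filter_eq_nil_iff]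
    intro i hi
    rw [List.mem_range] at hi
    unfold isPeakB
    rw [List.getD_append _ _ _ _ (by simpa using hi), getD_rep hi]
    simp
  have h2 : ∀ i, (isPeakB (List.replicate e false ++ w) ∘ (e + ·)) i = isPeakB w i := by
    intro i
    have := isPeakB_shift (List.replicate e false) w i
    simpa using this
  rw [h1, List.filter_congr (fun i _ => h2 i)]
  simp

lemma peakList_append_u {c : ℕ} (hc : 1 ≤ c) (w : List Bool) :
    peakList (List.replicate c true ++ w) =
      (if w.getD 0 true then [] else [c-1]) ++ (peakList w).map (c + ·) := by
  obtain ⟨m, rfl⟩ : ∃ m, c = m + 1 := ⟨c - 1, by omega⟩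
  unfold peakList
  rw [List.length_append, List.length_replicate, List.range_add, List.filter_append,
    List.filter_map]
  have h2 : ∀ i, (isPeakB (List.replicate (m+1) true ++ w) ∘ ((m+1) + ·)) i = isPeakB w i := by
    intro i
    have := isPeakB_shift (List.replicate (m+1) true) w i
    simpa using this
  rw [List.filter_congr (fun i _ => h2 i)]
  have h1 : (List.range (m+1)).filter (isPeakB (List.replicate (m+1) true ++ w)) =
      (if w.getD 0 true then [] else [m]) := by
    rw [List.range_succ, List.filter_append]
    have ha : (List.range m).filter (isPeakB (List.replicate (m+1) true ++ w)) = [] := by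
      rw [List.filter_eq_nil_iff]
      intro i hi
      rw [List.mem_range] at hi
      unfold isPeakB
      rw [List.getD_append _ _ _ _ (by simp; omega), getD_rep (by omega),
          List.getD_append _ _ _ _ (by simp; omega), getD_rep (by omega)]
      simp
    have hb : isPeakB (List.replicate (m+1) true ++ w) m = !(w.getD 0 true) := by
      unfold isPeakB
      rw [List.getD_append _ _ _ _ (by simp), getD_rep (by omega),
          List.getD_append_right _ _ _ _ (by simp)]
      have : m + 1 - (List.replicate (m+1) true).length = 0 := by simp
      rw [this]
      simp
    rw [ha, List.nil_append]
    cases hw : w.getD 0 true <;> simp [hb, hw] <;> simpa [← List.getD_eq_getElem?_getD] using hw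
  rw [h1]
  simp


lemma peakHeights_append_d (e : ℕ) (w : List Bool) :
    peakHeights (List.replicate e false ++ w) = (peakHeights w).map (fun z : ℤ => z - e) := by
  unfold peakHeights
  rw [peakList_append_d, List.map_map, List.map_map]
  apply List.map_congr_left
  intro i _
  simp only [Function.comp_apply]
  rw [hgt_append]
  rw [hgt_replicate_false]
  simp only [List.length_replicate]
  have h2 : e + i + 1 - e = i + 1 := by omega
  rw [h2]
  push_cast
  omega

lemma peakHeights_append_u {c : ℕ} (hc : 1 ≤ c) (w : List Bool) :
    peakHeights (List.replicate c true ++ w) =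
      (if w.getD 0 true then [] else [(c:ℤ)]) ++ (peakHeights w).map (fun z : ℤ => z + c) := by
  unfold peakHeights
  rw [peakList_append_u hc, List.map_append, List.map_map, List.map_map]
  congr 1
  · cases hw : w.getD 0 true <;> simp [hw]
    rw [hgt_append, hgt_replicate_true]
    simp only [List.length_replicate]
    have h2 : c - 1 + 1 - c = 0 := by omega
    rw [h2, hgt_zero]
    push_cast
    omega
  · apply List.map_congr_left
    intro i _
    simp only [Function.comp_apply]
    rw [hgt_append, hgt_replicate_true]
    simp only [List.length_replicate]
    have h2 : c + i + 1 - c = i + 1 := by omega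
    rw [h2]
    push_cast
    omega


def ValidC : ℕ → List ℕ → Prop
  | _, [] => True
  | h, c :: t => 1 ≤ c ∧ c ≤ h + 1 ∧ ValidC (h+1) t

instance : ∀ h t, Decidable (ValidC h t)
  | _, [] => .isTrue trivial
  | h, c :: t =>
    have : Decidable (ValidC (h+1) t) := instDecidableValidC (h+1) t
    instDecidableAnd

def dW : ℕ → List ℕ → List Bool
  | h, [] => List.replicate h false
  | h, c :: t => List.replicate (c-1) false ++ (List.replicate c true ++ dW (h+1) t)

lemma length_eq_counts (l : List Bool) : l.length = l.count true + l.count false := by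
  induction l with
  | nil => simp
  | cons x t ih =>
    simp only [List.length_cons, List.count_cons, ih]
    cases x <;> simp <;> omega

lemma dW_count_true (t : List ℕ) : ∀ h, (dW h t).count true = t.sum := by
  induction t with
  | nil => intro h; simp [dW, List.count_replicate]
  | cons c t ih => intro h; simp [dW, List.count_replicate, List.count_append, ih]

lemma dW_count_false (t : List ℕ) : ∀ h, ValidC h t → (dW h t).count false = t.sum + h := by
  induction t with
  | nil => intro h _; simp [dW, List.count_replicate]
  | cons c t ih =>
    intro h hv
    obtain ⟨h1, h2, h3⟩ := hv
    simp [dW, List.count_replicate, List.count_append, ih (h+1) h3]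
    omega

lemma peakHeights_nil : peakHeights [] = [] := by
  simp [peakHeights, peakList]

lemma peakHeights_rep_false (h : ℕ) : peakHeights (List.replicate h false) = [] := by
  have := peakHeights_append_d h []
  simpa [peakHeights_nil] using this

lemma dW_ph (t : List ℕ) : ∀ h, ValidC h t →
    (∀ x ∈ peakHeights (dW h t), 1 ≤ x) ∧ (peakHeights (dW h t)).Pairwise (· < ·) := by
  induction t with
  | nil => intro h _; simp [dW, peakHeights_rep_false]
  | cons c t ih =>
    intro h hv
    obtain ⟨h1, h2, h3⟩ := hv
    obtain ⟨ihp, ihs⟩ := ih (h+1) h3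
    have key : peakHeights (dW h (c :: t)) =
        (if (dW (h+1) t).getD 0 true then [] else [(1:ℤ)]) ++
          (peakHeights (dW (h+1) t)).map (fun z : ℤ => z + 1) := by
      show peakHeights (List.replicate (c-1) false ++ (List.replicate c true ++ dW (h+1) t)) = _
      rw [peakHeights_append_d, peakHeights_append_u h1, List.map_append, List.map_map]
      congr 1
      · cases (dW (h+1) t).getD 0 true <;> simp
        have : ((c:ℤ)) - ((c-1:ℕ):ℤ) = 1 := by
          have : ((c-1:ℕ):ℤ) = (c:ℤ) - 1 := by omega
          rw [this]; ring
        rw [this]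
      · apply List.map_congr_left
        intro z _
        simp only [Function.comp_apply]
        have : ((c-1:ℕ):ℤ) = (c:ℤ) - 1 := by omega
        rw [this]; ring
    rw [key]
    by_cases hd : (dW (h+1) t).getD 0 true
    · rw [if_pos hd, List.nil_append]
      constructor
      · intro x hx
        obtain ⟨z, hz, rfl⟩ := List.mem_map.mp hx
        have := ihp z hz; omega
      · rw [List.pairwise_map]
        exact ihs.imp (by intro a b hab; omega)
    · rw [if_neg hd, List.singleton_append]
      constructor
      · intro x hx
        rcases List.mem_cons.mp hx with rfl | hx
        · omega
        · obtain ⟨z, hz, rfl⟩ := List.mem_map.mp hx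
          have := ihp z hz; omega
      · rw [List.pairwise_cons]
        constructor
        · intro x hx
          obtain ⟨z, hz, rfl⟩ := List.mem_map.mp hx
          have := ihp z hz; omega
        · rw [List.pairwise_map]
          exact ihs.imp (by intro a b hab; omega)

lemma dW_hgt_ge (t : List ℕ) : ∀ h, ValidC h t → ∀ j, -(h:ℤ) ≤ hgt (dW h t) j := by
  induction t with
  | nil =>
    intro h _ j
    show -(h:ℤ) ≤ hgt (List.replicate h false) j
    rw [hgt_replicate_false]
    omega
  | cons c t ih =>
    intro h hv j
    obtain ⟨h1, h2, h3⟩ := hv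
    show -(h:ℤ) ≤ hgt (List.replicate (c-1) false ++ (List.replicate c true ++ dW (h+1) t)) j
    rw [hgt_append, hgt_append, hgt_replicate_false, hgt_replicate_true]
    simp only [List.length_replicate]
    have := ih (h+1) h3 (j - (c-1) - c)
    rcases le_or_gt j (c-1) with hj | hj
    · have e1 : j - (c-1) = 0 := by omega
      rw [e1]
      simp only [Nat.zero_sub, hgt_zero]
      push_cast
      omega
    · rcases le_or_gt (j - (c-1)) c with hj2 | hj2
      · have : hgt (dW (h+1) t) (j - (c-1) - c) = 0 := by
          have e : j - (c-1) - c = 0 := by omega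
          rw [e]; exact hgt_zero _
        rw [this]
        push_cast
        omega
      · push_cast at this ⊢
        omega


lemma dropWhile_head_false {p : Bool → Bool} {l : List Bool} {b : Bool} {rest : List Bool}
    (h : l.dropWhile p = b :: rest) : p b = false := by
  induction l with
  | nil => simp at h
  | cons x xs ih =>
    rw [List.dropWhile_cons] at h
    by_cases hp : p x = true
    · rw [if_pos hp] at h; exact ih h
    · rw [if_neg hp] at h
      cases h
      simpa using hp

lemma dW_ones (k : ℕ) : ∀ (h : ℕ) (t : List ℕ),
    dW h (List.replicate k 1 ++ t) = List.replicate k true ++ dW (h+k) t := by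
  induction k with
  | zero => intro h t; simp
  | succ k ih =>
    intro h t
    rw [List.replicate_succ, List.cons_append]
    show List.replicate 0 false ++ (List.replicate 1 true ++ dW (h+1) (List.replicate k 1 ++ t)) = _
    rw [ih (h+1) t, List.replicate_succ (n := k)]
    have : h + 1 + k = h + (k + 1) := by omega
    rw [this]
    simp

lemma validC_ones (k : ℕ) : ∀ (m : ℕ) (t : List ℕ),
    ValidC (m + k) t → ValidC m (List.replicate k 1 ++ t) := by
  induction k with
  | zero => intro m t ht; simpa using ht
  | succ k ih =>
    intro m t ht
    rw [List.replicate_succ, List.cons_append]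
    have hk : m + 1 + k = m + (k + 1) := by omega
    exact ⟨le_refl 1, by omega, ih (m+1) t (by rw [hk]; exact ht)⟩

lemma leadF : ∀ (e : ℕ) (rest : List Bool),
    ((List.replicate e false ++ true :: rest).takeWhile (fun x => x == false)).length = e := by
  intro e rest
  induction e with
  | zero => simp [List.takeWhile_cons]
  | succ e ih =>
    rw [List.replicate_succ, List.cons_append, List.takeWhile_cons]
    simpa using ih

lemma dW_cons_eq (h c : ℕ) (t : List ℕ) (hc : 1 ≤ c) :
    dW h (c :: t) = List.replicate (c-1) false ++ true :: (List.replicate (c-1) true ++ dW (h+1) t) := by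
  show List.replicate (c-1) false ++ (List.replicate c true ++ dW (h+1) t) = _
  congr 1
  obtain ⟨m, rfl⟩ : ∃ m, c = m + 1 := ⟨c - 1, by omega⟩
  rw [List.replicate_succ]
  simp

lemma dW_inj : ∀ (t1 t2 : List ℕ) (h : ℕ), ValidC h t1 → ValidC h t2 →
    dW h t1 = dW h t2 → t1 = t2 := by
  intro t1
  induction t1 with
  | nil =>
    intro t2 h _ hv2 heq
    cases t2 with
    | nil => rfl
    | cons c t =>
      exfalso
      have e1 : (dW h []).count true = 0 := dW_count_true [] h
      have e2 : (dW h (c :: t)).count true = c + t.sum := dW_count_true (c :: t) h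
      rw [heq, e2] at e1
      have : 1 ≤ c := hv2.1
      omega
  | cons c t ih =>
    intro t2 h hv1 hv2 heq
    cases t2 with
    | nil =>
      exfalso
      have e1 : (dW h []).count true = 0 := dW_count_true [] h
      have e2 : (dW h (c :: t)).count true = c + t.sum := dW_count_true (c :: t) h
      rw [← heq, e2] at e1
      have : 1 ≤ c := hv1.1
      omega
    | cons c' t' =>
      obtain ⟨hc1, hc2, hv1'⟩ := hv1
      obtain ⟨hc1', hc2', hv2'⟩ := hv2
      have heq' := heq
      rw [dW_cons_eq h c t hc1, dW_cons_eq h c' t' hc1'] at heq'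
      have hcc : c - 1 = c' - 1 := by
        have l1 := leadF (c-1) (List.replicate (c-1) true ++ dW (h+1) t)
        have l2 := leadF (c'-1) (List.replicate (c'-1) true ++ dW (h+1) t')
        rw [← heq'] at l2
        rw [l1] at l2
        omega
      have hcc' : c = c' := by omega
      subst hcc'
      rw [dW_cons_eq h c t hc1, dW_cons_eq h c t' hc1] at heq
      have h3 := List.append_cancel_left heq
      have h4 : List.replicate (c-1) true ++ dW (h+1) t = List.replicate (c-1) true ++ dW (h+1) t' := by
        injection h3
      have h5 := List.append_cancel_left h4
      rw [ih t' (h+1) hv1' hv2' h5]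


lemma parse : ∀ (N : ℕ) (w : List Bool) (h : ℕ), w.length ≤ N →
    (w.count true : ℤ) + h = w.count false →
    (∀ j, 0 ≤ (h:ℤ) + hgt w j) →
    (peakHeights w).Pairwise (· < ·) →
    (∀ x ∈ peakHeights w, 1 ≤ x) →
    ∃ t, ValidC h t ∧ t.sum = w.count true ∧ dW h t = w := by
  intro N
  induction N with
  | zero =>
    intro w h hlen h1 h2 h3 h4
    have : w = [] := List.eq_nil_of_length_eq_zero (by omega)
    subst this
    have : h = 0 := by simp at h1; omega
    subst this
    exact ⟨[], trivial, by simp, by simp [dW]⟩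
  | succ N ih =>
    intro w h hlen h1 h2 h3 h4
    -- decompose leading d's
    set e := (w.takeWhile (fun x => x == false)).length with he
    have hw2 : w = List.replicate e false ++ w.dropWhile (fun x => x == false) := by
      conv_lhs => rw [← List.takeWhile_append_dropWhile (p := fun x => x == false) (l := w)]
      congr 1
      have : ∀ b ∈ w.takeWhile (fun x => x == false), b = false := by
        intro b hb
        have := List.mem_takeWhile_imp hb
        simpa using this
      exact List.eq_replicate_of_mem this
    set w2 := w.dropWhile (fun x => x == false) with hw2def
    cases hw2c : w2 with
    | nil =>
      -- w is all d's
      rw [hw2c, List.append_nil] at hw2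
      refine ⟨[], trivial, by simp [hw2, List.count_replicate], ?_⟩
      have hck : (w.count true : ℤ) = 0 := by simp [hw2, List.count_replicate]
      have hcf : (w.count false : ℤ) = e := by simp [hw2, List.count_replicate]
      have : (h:ℤ) = e := by omega
      have : h = e := by omega
      subst this
      simp [dW, hw2]
    | cons b rest =>
      have hb : b = true := by
        have := dropWhile_head_false (p := fun x => x == false) (l := w) (by rw [← hw2def, hw2c])
        simpa using this
      subst hb
      -- decompose leading u's of w2
      set a := (w2.takeWhile (fun x => x == true)).length with ha
      have ha1 : 1 ≤ a := by
        rw [ha, hw2c]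
        simp [List.takeWhile_cons]
      have hw3 : w2 = List.replicate a true ++ w2.dropWhile (fun x => x == true) := by
        conv_lhs => rw [← List.takeWhile_append_dropWhile (p := fun x => x == true) (l := w2)]
        congr 1
        have : ∀ b ∈ w2.takeWhile (fun x => x == true), b = true := by
          intro b hb
          have := List.mem_takeWhile_imp hb
          simpa using this
        exact List.eq_replicate_of_mem this
      set w3 := w2.dropWhile (fun x => x == true) with hw3def
      have hwfull : w = List.replicate e false ++ (List.replicate a true ++ w3) := by
        rw [← hw3, ← hw2]
      -- counts
      have hct : (w.count true : ℤ) = a + w3.count true := by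
        rw [hwfull]; simp [List.count_append, List.count_replicate]
      have hcf : (w.count false : ℤ) = e + w3.count false := by
        rw [hwfull]; simp [List.count_append, List.count_replicate]
      -- e ≤ h
      have hee : (e:ℤ) ≤ h := by
        have := h2 e
        rw [hwfull, hgt_append, hgt_replicate_false] at this
        simp only [List.length_replicate, Nat.sub_self, hgt_zero] at this
        omega
      cases hw3c : w3 with
      | nil =>
        exfalso
        rw [hw3c, List.append_nil] at hwfull
        have := h2 w.length
        rw [hgt_of_le (le_refl _)] at this
        have hct' : (w.count true : ℤ) = a := by rw [hwfull]; simp [List.count_replicate]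
        have hcf' : (w.count false : ℤ) = e := by rw [hwfull]; simp [List.count_replicate]
        omega
      | cons b' rest' =>
        have hb' : b' = false := by
          have := dropWhile_head_false (p := fun x => x == true) (l := w2) (by rw [← hw3def, hw3c])
          simpa using this
        subst hb'
        have hgd : w3.getD 0 true = false := by rw [hw3c]; rfl
        -- peak heights decomposition
        have hph : peakHeights w = ((a:ℤ) - e) :: (peakHeights w3).map (fun z : ℤ => z + a - e) := by
          rw [hwfull, peakHeights_append_d, peakHeights_append_u ha1, hgd]
          simp only [if_false, List.map_append, List.map_map, Bool.false_eq_true]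
          simp only [List.map_cons, List.map_nil, List.singleton_append]
          have hfun : ((fun z : ℤ => z - (e:ℤ)) ∘ fun z : ℤ => z + (a:ℤ)) = (fun z : ℤ => z + a - e) := by
            funext z
            simp
          rw [hfun]
        have hae : (1:ℤ) ≤ (a:ℤ) - e := by
          have : ((a:ℤ) - e) ∈ peakHeights w := by rw [hph]; exact List.mem_cons_self
          exact h4 _ this
        have haeN : e < a := by omega
        -- invariant for w3
        set h' : ℕ := h + a - e with hh'
        have hh'e : (h':ℤ) = (h:ℤ) + a - e := by omega
        have i1 : (w3.count true : ℤ) + h' = w3.count false := by omega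
        have i2 : ∀ j, 0 ≤ (h':ℤ) + hgt w3 j := by
          intro j
          have := h2 (e + a + j)
          rw [hwfull, hgt_append, hgt_append] at this
          simp only [List.length_replicate, hgt_replicate_false, hgt_replicate_true] at this
          have e1 : e + a + j - e = a + j := by omega
          rw [e1] at this
          have e2 : a + j - a = j := by omega
          rw [e2] at this
          push_cast at this ⊢
          omega
        have i3 : (peakHeights w3).Pairwise (· < ·) := by
          rw [hph] at h3
          have := (List.pairwise_cons.mp h3).2
          rw [List.pairwise_map] at this
          exact this.imp (by intro p q hpq; omega)
        have i4 : ∀ x ∈ peakHeights w3, 1 ≤ x := by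
          intro x hx
          have hmem : ((x:ℤ) + a - e) ∈ peakHeights w := by
            rw [hph]
            refine List.mem_cons_of_mem _ ?_
            exact List.mem_map.mpr ⟨x, hx, rfl⟩
          have := (List.pairwise_cons.mp (hph ▸ h3)).1 _ (List.mem_map.mpr ⟨x, hx, rfl⟩)
          omega
        have hlen3 : w3.length ≤ N := by
          have : w.length = e + a + w3.length := by
            rw [hwfull, List.length_append, List.length_append, List.length_replicate,
              List.length_replicate]
            omega
          omega
        obtain ⟨t3, ht3v, ht3s, ht3w⟩ := ih w3 h' hlen3 i1 i2 i3 i4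
        refine ⟨(e+1) :: (List.replicate (a - e - 1) 1 ++ t3), ?_, ?_, ?_⟩
        · refine ⟨by omega, by omega, ?_⟩
          apply validC_ones
          have : h + 1 + (a - e - 1) = h' := by omega
          rw [this]
          exact ht3v
        · have hctN : w.count true = a + w3.count true := by
            rw [hwfull]; simp [List.count_append, List.count_replicate]
          have hs : ((e+1) :: (List.replicate (a - e - 1) 1 ++ t3)).sum
              = (e+1) + ((a - e - 1) + t3.sum) := by
            simp [List.sum_replicate]
          rw [hs, ht3s, hctN]
          omega
        · show List.replicate ((e+1)-1) false ++ (List.replicate (e+1) true ++ dW (h+1) (List.replicate (a - e - 1) 1 ++ t3)) = w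
          rw [dW_ones]
          have e5 : (e+1)-1 = e := by omega
          have e6 : h + 1 + (a - e - 1) = h' := by omega
          rw [e5, e6, ht3w]
          rw [hwfull]
          congr 1
          rw [← List.append_assoc]
          congr 1
          rw [← List.replicate_add]
          congr 1
          omega
      

lemma mem_boolLists {m : ℕ} {w : List Bool} : w ∈ boolLists m ↔ w.length = m := by
  constructor
  · intro hw
    obtain ⟨f, _, rfl⟩ := Finset.mem_image.mp hw
    simp
  · intro hw
    subst hw
    exact Finset.mem_image.mpr ⟨w.get, Finset.mem_univ _, List.ofFn_get w⟩

lemma mem_dyckFinset {n : ℕ} {w : List Bool} :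
    w ∈ dyckFinset n ↔ w.length = 2*n ∧ IsDyckWord w := by
  rw [dyckFinset, Finset.mem_filter, mem_boolLists]

def allLists (L B : ℕ) : Finset (List ℕ) :=
  (Finset.range (L+1)).biUnion
    (fun m => Finset.image (fun f : Fin m → Fin (B+1) => List.ofFn (fun i => (f i : ℕ))) Finset.univ)

lemma mem_allLists {L B : ℕ} {t : List ℕ} :
    t ∈ allLists L B ↔ t.length ≤ L ∧ ∀ x ∈ t, x ≤ B := by
  rw [allLists, Finset.mem_biUnion]
  constructor
  · rintro ⟨m, hm, ht⟩
    obtain ⟨f, _, rfl⟩ := Finset.mem_image.mp ht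
    rw [Finset.mem_range] at hm
    constructor
    · simp; omega
    · intro x hx
      obtain ⟨i, rfl⟩ := List.mem_ofFn.mp hx
      exact Nat.lt_succ_iff.mp (f i).isLt
  · rintro ⟨h1, h2⟩
    refine ⟨t.length, Finset.mem_range.mpr (by omega), ?_⟩
    refine Finset.mem_image.mpr ⟨fun i => ⟨t.get i, ?_⟩, Finset.mem_univ _, ?_⟩
    · exact Nat.lt_succ_iff.mpr (h2 _ (List.get_mem t i))
    · exact List.ofFn_get t

lemma validC_entries : ∀ (t : List ℕ) (h : ℕ), ValidC h t → ∀ x ∈ t, 1 ≤ x := by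
  intro t
  induction t with
  | nil => intro h _ x hx; simp at hx
  | cons c t ih =>
    intro h hv x hx
    rcases List.mem_cons.mp hx with rfl | hx
    · exact hv.1
    · exact ih (h+1) hv.2.2 x hx

lemma length_le_sum {t : List ℕ} (h : ∀ x ∈ t, 1 ≤ x) : t.length ≤ t.sum := by
  induction t with
  | nil => simp
  | cons c s ih =>
    simp only [List.length_cons, List.sum_cons]
    have h1 := h c List.mem_cons_self
    have h2 := ih (fun x hx => h x (List.mem_cons_of_mem _ hx))
    omega

lemma validC_iff : ∀ (t : List ℕ) (h : ℕ), ValidC h t ↔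
    ∀ i < t.length, 1 ≤ t.getD i 0 ∧ t.getD i 0 ≤ h + i + 1 := by
  intro t
  induction t with
  | nil => intro h; simp [ValidC]
  | cons c t ih =>
    intro h
    constructor
    · rintro ⟨h1, h2, h3⟩ i hi
      cases i with
      | zero => simpa using ⟨h1, by omega⟩
      | succ i =>
        have := (ih (h+1)).mp h3 i (by simpa using hi)
        simp only [List.getD_cons_succ]
        omega
    · intro hall
      have h0 := hall 0 (by simp)
      simp only [List.getD_cons_zero] at h0
      refine ⟨h0.1, by omega, (ih (h+1)).mpr ?_⟩
      intro i hi
      have := hall (i+1) (by simpa using hi)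
      simp only [List.getD_cons_succ] at this
      omega

def CF (h n : ℕ) : Finset (List ℕ) :=
  (allLists n (n+h)).filter (fun t => t.sum = n ∧ ValidC h t)

lemma mem_CF {h n : ℕ} {t : List ℕ} : t ∈ CF h n ↔ t.sum = n ∧ ValidC h t := by
  rw [CF, Finset.mem_filter, mem_allLists]
  constructor
  · rintro ⟨_, h2⟩; exact h2
  · rintro ⟨h1, h2⟩
    refine ⟨⟨?_, ?_⟩, h1, h2⟩
    · have := length_le_sum (validC_entries t h h2)
      omega
    · intro x hx
      obtain ⟨i, hi, rfl⟩ := List.mem_iff_get.mp hx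
      have := (validC_iff t h).mp h2 i (by omega)
      rw [List.getD_eq_getElem _ _ (by omega)] at this
      have hl := length_le_sum (validC_entries t h h2)
      simp only [List.get_eq_getElem]
      omega

lemma set_eq_CF (n : ℕ) :
    {l : List ℕ | l.sum = n ∧ ∀ i < l.length, 0 < l.getD i 0 ∧ l.getD i 0 ≤ i + 1}
      = ↑(CF 0 n) := by
  ext t
  simp only [Set.mem_setOf_eq, Finset.coe_filter, Finset.mem_coe, mem_CF]
  rw [validC_iff]
  constructor
  · rintro ⟨h1, h2⟩
    exact ⟨h1, fun i hi => by have := h2 i hi; omega⟩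
  · rintro ⟨h1, h2⟩
    exact ⟨h1, fun i hi => by have := h2 i hi; omega⟩

lemma dyck_peaks_pos {w : List Bool} (hd : IsDyckWord w) :
    ∀ x ∈ peakHeights w, 1 ≤ x := by
  intro x hx
  obtain ⟨i, hi, rfl⟩ := List.mem_map.mp hx
  have hi' : i ∈ List.range w.length := List.mem_of_mem_filter hi
  rw [List.mem_range] at hi'
  have hp : isPeakB w i = true := List.of_mem_filter hi
  have hget : w.getD i false = true := by
    unfold isPeakB at hp
    exact (Bool.and_eq_true _ _).mp hp |>.1
  have := hgt_succ hi'
  rw [this, hget]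
  have := hd.2 i
  simp only [if_true]
  omega

lemma card_main (n : ℕ) :
    ((dyckFinset n).filter (fun w => (peakHeights w).Pairwise (· < ·))).card
      = (CF 0 n).card := by
  symm
  apply Finset.card_bij (fun t _ => dW 0 t)
  · intro t ht
    obtain ⟨hsum, hv⟩ := mem_CF.mp ht
    have hct := dW_count_true t 0
    have hcf := dW_count_false t 0 hv
    rw [Finset.mem_filter]
    refine ⟨mem_dyckFinset.mpr ⟨?_, ?_, ?_⟩, (dW_ph t 0 hv).2⟩
    · rw [length_eq_counts, hct, hcf, hsum]; omega
    · rw [hct, hcf]; omega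
    · intro j
      have := dW_hgt_ge t 0 hv j
      simpa using this
  · intro t1 h1 t2 h2 heq
    exact dW_inj t1 t2 0 (mem_CF.mp h1).2 (mem_CF.mp h2).2 heq
  · intro w hw
    rw [Finset.mem_filter] at hw
    obtain ⟨hwd, hpw⟩ := hw
    obtain ⟨hlen, hdyck⟩ := mem_dyckFinset.mp hwd
    have hcnt : w.count true = w.count false := hdyck.1
    obtain ⟨t, htv, hts, htw⟩ := parse w.length w 0 (le_refl _)
      (by rw [hcnt]; simp) (by intro j; have := hdyck.2 j; simpa using this) hpw
      (dyck_peaks_pos hdyck)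
    have hsum : t.sum = n := by
      have := length_eq_counts w
      omega
    exact ⟨t, mem_CF.mpr ⟨hsum, htv⟩, htw⟩


def EF (a j : ℕ) : Finset (List ℕ) :=
  (allLists a j).filter (fun t => t.length = a ∧ t.sum = j ∧ ∀ i < t.length, t.getD i 0 ≤ i)

lemma le_sum_of_mem {t : List ℕ} {x : ℕ} (hx : x ∈ t) : x ≤ t.sum :=
  List.single_le_sum (fun y _ => Nat.zero_le y) x hx

lemma mem_EF {a j : ℕ} {t : List ℕ} :
    t ∈ EF a j ↔ t.length = a ∧ t.sum = j ∧ ∀ i < t.length, t.getD i 0 ≤ i := by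
  rw [EF, Finset.mem_filter, mem_allLists]
  constructor
  · rintro ⟨_, h⟩; exact h
  · rintro ⟨h1, h2, h3⟩
    exact ⟨⟨by omega, fun x hx => by have := le_sum_of_mem hx; omega⟩, h1, h2, h3⟩

lemma EF_zero (j : ℕ) : EF 0 j = if j = 0 then {[]} else ∅ := by
  ext t
  rw [mem_EF]
  constructor
  · rintro ⟨h1, h2, _⟩
    have : t = [] := List.eq_nil_of_length_eq_zero h1
    subst this
    simp at h2
    simp [h2]
  · intro ht
    by_cases hj : j = 0
    · rw [if_pos hj] at ht
      simp at ht
      subst ht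
      simp [hj]
    · rw [if_neg hj] at ht
      simp at ht

lemma EF_succ (a j : ℕ) : EF (a+1) j =
    ((Finset.range (a+1)).filter (· ≤ j)).biUnion
      (fun k => (EF a (j-k)).image (fun t => t ++ [k])) := by
  ext t
  rw [mem_EF, Finset.mem_biUnion]
  constructor
  · rintro ⟨h1, h2, h3⟩
    have hne : t ≠ [] := by intro h; rw [h] at h1; simp at h1
    set k := t.getLast hne with hk
    have hsplit : t.dropLast ++ [k] = t := List.dropLast_append_getLast hne
    have hlend : t.dropLast.length = a := by rw [List.length_dropLast, h1]; omega
    have hkd : t.getD a 0 = k := by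
      rw [← hsplit, List.getD_append_right _ _ _ _ (by omega)]
      rw [hlend]
      simp
    have hka : k ≤ a := by
      have := h3 a (by omega)
      rw [hkd] at this
      exact this
    have hkj : k ≤ j := by
      have : k ∈ t := List.getLast_mem hne
      have := le_sum_of_mem this
      omega
    refine ⟨k, Finset.mem_filter.mpr ⟨Finset.mem_range.mpr (by omega), hkj⟩, ?_⟩
    refine Finset.mem_image.mpr ⟨t.dropLast, ?_, hsplit⟩
    rw [mem_EF]
    refine ⟨hlend, ?_, ?_⟩
    · have : t.dropLast.sum + k = j := by
        rw [← h2]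
        conv_rhs => rw [← hsplit]
        simp
      omega
    · intro i hi
      have : t.dropLast.getD i 0 = t.getD i 0 := by
        conv_rhs => rw [← hsplit]
        rw [List.getD_append _ _ _ _ (by omega)]
      rw [this]
      exact h3 i (by omega)
  · rintro ⟨k, hk, ht⟩
    obtain ⟨s, hs, rfl⟩ := Finset.mem_image.mp ht
    rw [mem_EF] at hs
    obtain ⟨hs1, hs2, hs3⟩ := hs
    rw [Finset.mem_filter, Finset.mem_range] at hk
    refine ⟨by simp [hs1], ?_, ?_⟩
    · simp [List.sum_append, hs2]
      omega
    · intro i hi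
      simp only [List.length_append, hs1, List.length_cons, List.length_nil] at hi
      rcases lt_or_ge i a with hia | hia
      · rw [List.getD_append _ _ _ _ (by omega)]
        exact hs3 i (by omega)
      · have : i = a := by omega
        subst this
        rw [List.getD_append_right _ _ _ _ (by omega), hs1]
        simpa using by omega

lemma card_EF_succ (a j : ℕ) :
    (EF (a+1) j).card = ∑ k ∈ Finset.range (a+1), if k ≤ j then (EF a (j-k)).card else 0 := by
  rw [EF_succ, Finset.card_biUnion, ← Finset.sum_filter]
  · apply Finset.sum_congr rfl
    intro k _
    apply Finset.card_image_of_injective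
    exact List.append_left_injective [k]
  · intro k hk k' hk' hne
    rw [Function.onFun, Finset.disjoint_left]
    intro t ht ht'
    obtain ⟨s, _, rfl⟩ := Finset.mem_image.mp ht
    obtain ⟨s', hs', heq⟩ := Finset.mem_image.mp ht'
    apply hne
    have e1 : (s' ++ [k']).getLast? = some k' := by simp
    have e2 : (s ++ [k]).getLast? = some k := by simp
    rw [heq, e2] at e1
    exact Option.some_inj.mp e1

lemma coeff_qfact (a : ℕ) : ∀ j, PowerSeries.coeff j (qfact a) = ((EF a j).card : ℚ) := by
  induction a with
  | zero =>
    intro j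
    rw [qfact, Finset.prod_range_zero, PowerSeries.coeff_one, EF_zero]
    by_cases hj : j = 0 <;> simp [hj]
  | succ a ih =>
    intro j
    rw [qfact, Finset.prod_range_succ, ← qfact]
    rw [show qint (a+1) = ∑ k ∈ Finset.range (a+1), (PowerSeries.X : PowerSeries ℚ) ^ k from rfl]
    rw [Finset.mul_sum, map_sum]
    rw [card_EF_succ]
    push_cast
    apply Finset.sum_congr rfl
    intro k _
    rw [PowerSeries.coeff_mul_X_pow']
    by_cases hk : k ≤ j
    · rw [if_pos hk, if_pos hk, ih]
    · rw [if_neg hk, if_neg hk]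


lemma getD_map_lt (f : ℕ → ℕ) (t : List ℕ) {i : ℕ} (h : i < t.length) :
    (t.map f).getD i 0 = f (t.getD i 0) := by
  rw [List.getD_eq_getElem _ _ (by simpa using h), List.getD_eq_getElem _ _ h]
  simp

lemma sum_map_add_one (t : List ℕ) : (t.map (· + 1)).sum = t.sum + t.length := by
  induction t with
  | nil => simp
  | cons c s ih => simp [ih]; omega

lemma card_CF_len (n a : ℕ) (ha : a ≤ n) :
    ((CF 0 n).filter (fun t => t.length = a)).card = (EF a (n-a)).card := by
  symm
  apply Finset.card_bij (fun t _ => t.map (· + 1))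
  · intro t ht
    obtain ⟨ht1, ht2, ht3⟩ := mem_EF.mp ht
    rw [Finset.mem_filter]
    constructor
    · rw [mem_CF]
      constructor
      · rw [sum_map_add_one, ht1, ht2]; omega
      · rw [validC_iff]
        intro i hi
        rw [List.length_map] at hi
        rw [getD_map_lt _ _ hi]
        show 1 ≤ t.getD i 0 + 1 ∧ t.getD i 0 + 1 ≤ 0 + i + 1
        have := ht3 i hi
        omega
    · rw [List.length_map]; exact ht1
  · intro t1 h1 t2 h2 heq
    have : Function.Injective (fun x : ℕ => x + 1) := fun x y h => Nat.succ_injective h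
    exact (List.map_injective_iff.mpr this) heq
  · intro t ht
    rw [Finset.mem_filter] at ht
    obtain ⟨htc, htl⟩ := ht
    obtain ⟨hsum, hv⟩ := mem_CF.mp htc
    have hent := validC_entries t 0 hv
    refine ⟨t.map (· - 1), ?_, ?_⟩
    · rw [mem_EF]
      have hmm : (t.map (· - 1)).map (· + 1) = t := by
        rw [List.map_map]
        have : ∀ x ∈ t, ((fun x : ℕ => x + 1) ∘ (fun x : ℕ => x - 1)) x = id x := by
          intro x hx
          have := hent x hx
          simp only [Function.comp_apply, id]
          omega
        rw [List.map_congr_left this, List.map_id]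
      refine ⟨by rw [List.length_map]; exact htl, ?_, ?_⟩
      · have := sum_map_add_one (t.map (· - 1))
        rw [hmm] at this
        rw [List.length_map, htl] at this
        omega
      · intro i hi
        rw [List.length_map] at hi
        rw [getD_map_lt _ _ hi]
        show t.getD i 0 - 1 ≤ i
        have := (validC_iff t 0).mp hv i hi
        omega
    · rw [List.map_map]
      have : ∀ x ∈ t, ((fun x : ℕ => x + 1) ∘ (fun x : ℕ => x - 1)) x = id x := by
        intro x hx
        have := hent x hx
        simp only [Function.comp_apply, id]
        omega
      rw [List.map_congr_left this, List.map_id]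

lemma gf_eq (n : ℕ) : ((CF 0 n).card : ℚ)
    = ∑ a ∈ Finset.range (n + 1), (PowerSeries.coeff n) ((PowerSeries.X : PowerSeries ℚ) ^ a * qfact a) := by
  have hfib : (CF 0 n).card = ∑ a ∈ Finset.range (n+1), ((CF 0 n).filter (fun t => t.length = a)).card := by
    apply Finset.card_eq_sum_card_fiberwise
    intro t ht
    obtain ⟨hsum, hv⟩ := mem_CF.mp ht
    have := length_le_sum (validC_entries t 0 hv)
    rw [Finset.mem_coe, Finset.mem_range]
    omega
  rw [hfib]
  push_cast
  apply Finset.sum_congr rfl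
  intro a haa
  rw [Finset.mem_range] at haa
  have ha : a ≤ n := by omega
  rw [card_CF_len n a ha, mul_comm, PowerSeries.coeff_mul_X_pow', if_pos ha, coeff_qfact]

end Aux

open PowerSeries in
/-- The generating function for Dyck paths with strictly
increasing peak heights is `Σ_{a≥0} z^a [a]_z!` (an equality of coefficients,
the sum being finite in each degree); moreover, the number of such paths of
semilength `n` equals the number of compositions `(c₁,…,c_m)` of `n` with
`c_i ≤ i` for all `i`. -/
theorem strictly_increasing_peaks_gf :
    (∀ n : ℕ,
      ((((dyckFinset n).filter
          (fun w => (peakHeights w).Pairwise (· < ·))).card : ℚ)) =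
        ∑ a ∈ Finset.range (n + 1), (coeff n) ((X : PowerSeries ℚ) ^ a * qfact a)) ∧
    (∀ n : ℕ,
      ((dyckFinset n).filter (fun w => (peakHeights w).Pairwise (· < ·))).card =
        Set.ncard {l : List ℕ | l.sum = n ∧
          ∀ i < l.length, 0 < l.getD i 0 ∧ l.getD i 0 ≤ i + 1}) := by
  constructor
  · intro n
    rw [Aux.card_main n]
    exact Aux.gf_eq n
  · intro n
    rw [Aux.card_main n, Aux.set_eq_CF n, Set.ncard_coe_finset]
end
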